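/- arXiv:cs/0609097 — 5 statements merged into one kernel-verified Lean document; each statement's English description precedes it below -/
import Mathlib

section
/- Let d ≥ 1, r_vel > 0, r_ctr > 0. For any two points a, b ∈ ℝ^d with δ = ‖b − a‖ > 0, define T(δ) = 2·√(δ/r_ctr) if δ ≤ r_vel²/r_ctr, and T(δ) = r_vel/r_ctr + δ/r_vel otherwise. Then there exists a feasible trajectory p for the double integrator with speed bound r_vel and control bound r_ctr such that p(0) = a, p(T(δ)) = b, and p′(0) = 0 = p′(T(δ)) (the vehicle travels from rest at a to rest at b in time T(δ)). -/
noncomputable section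

/-- A feasible trajectory for the double integrator with speed bound `rvel` and
control bound `rctr`: a C¹ map with speed bounded by `rvel` and derivative
Lipschitz with constant `rctr`. -/
def IsFeasibleTraj (d : ℕ) (rvel rctr : ℝ) (p : ℝ → EuclideanSpace ℝ (Fin d)) : Prop :=
  ContDiff ℝ 1 p ∧ (∀ t : ℝ, ‖deriv p t‖ ≤ rvel) ∧
    LipschitzWith (Real.toNNReal rctr) (deriv p)

/-- The STOP-GO-STOP leg time to traverse a distance `δ`. -/
def legTime (rvel rctr δ : ℝ) : ℝ :=
  if δ ≤ rvel ^ 2 / rctr then 2 * Real.sqrt (δ / rctr) else rvel / rctr + δ / rvel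

theorem stop_go_stop_leg (d : ℕ) (hd : 1 ≤ d) (rvel rctr : ℝ)
    (hv : 0 < rvel) (hc : 0 < rctr)
    (a b : EuclideanSpace ℝ (Fin d)) (hab : 0 < ‖b - a‖) :
    ∃ p : ℝ → EuclideanSpace ℝ (Fin d),
      IsFeasibleTraj d rvel rctr p ∧
      p 0 = a ∧
      p (legTime rvel rctr ‖b - a‖) = b ∧
      deriv p 0 = 0 ∧
      deriv p (legTime rvel rctr ‖b - a‖) = 0 := by
  set δ := ‖b - a‖ with hδdef
  set T := legTime rvel rctr δ with hTdef
  set vmax := min rvel (Real.sqrt (δ * rctr)) with hvmdef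
  set τ := vmax / rctr with hτdef
  have hvmax_pos : 0 < vmax := lt_min hv (Real.sqrt_pos.2 (mul_pos hab hc))
  have hvmax_le : vmax ≤ rvel := min_le_left _ _
  have hτpos : 0 < τ := div_pos hvmax_pos hc
  have hrτ : rctr * τ = vmax := by rw [hτdef, mul_div_assoc', mul_div_cancel_left₀ _ hc.ne']
  have key : vmax * (T - τ) = δ ∧ 2 * τ ≤ T := by
    rcases le_or_gt δ (rvel ^ 2 / rctr) with hcase | hcase
    · have hδr : δ * rctr ≤ rvel ^ 2 := (le_div_iff₀ hc).1 hcase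
      have h1 : Real.sqrt (δ * rctr) ≤ rvel := by
        rw [show rvel = Real.sqrt (rvel ^ 2) from (Real.sqrt_sq hv.le).symm]
        exact Real.sqrt_le_sqrt hδr
      have hvm' : vmax = Real.sqrt (δ * rctr) := min_eq_right h1
      have hτ' : τ = Real.sqrt (δ / rctr) := by
        rw [hτdef, hvm', div_eq_iff hc.ne']
        rw [show rctr = Real.sqrt (rctr ^ 2) from (Real.sqrt_sq hc.le).symm,
          ← Real.sqrt_mul (by positivity)]
        congr 1
        field_simp
        ring_nf
        rw [Real.sq_sqrt (by positivity)]
      have hT' : T = 2 * Real.sqrt (δ / rctr) := by rw [hTdef, legTime, if_pos hcase]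
      have hmul : Real.sqrt (δ * rctr) * Real.sqrt (δ / rctr) = δ := by
        rw [← Real.sqrt_mul (by positivity),
          show δ * rctr * (δ / rctr) = δ ^ 2 by field_simp]
        exact Real.sqrt_sq hab.le
      constructor
      · rw [hvm', hT', hτ']; linear_combination hmul
      · rw [hT', hτ']
    · have hδr : rvel ^ 2 < δ * rctr := (div_lt_iff₀ hc).1 hcase
      have h2 : rvel ≤ Real.sqrt (δ * rctr) := by
        rw [show rvel = Real.sqrt (rvel ^ 2) from (Real.sqrt_sq hv.le).symm]
        exact Real.sqrt_le_sqrt hδr.le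
      have hvm' : vmax = rvel := min_eq_left h2
      have hτ' : τ = rvel / rctr := by rw [hτdef, hvm']
      have hT' : T = rvel / rctr + δ / rvel := by
        rw [hTdef, legTime, if_neg (not_le.2 hcase)]
      constructor
      · rw [hvm', hT', hτ']; field_simp; ring
      · rw [hT', hτ']
        have h3 : rvel / rctr ≤ δ / rvel := by
          rw [div_le_div_iff₀ hc hv]; nlinarith
        linarith
  obtain ⟨key1, key2⟩ := key
  have hTpos : 0 < T := by linarith
  set vf : ℝ → ℝ := fun t => max 0 (min vmax (min (rctr * t) (rctr * (T - t)))) with hvf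
  have hv_cont : Continuous vf := by
    apply continuous_const.max
    exact continuous_const.min ((continuous_const.mul continuous_id).min
      (continuous_const.mul (continuous_const.sub continuous_id)))
  have hv_nonneg : ∀ t, 0 ≤ vf t := fun t => le_max_left _ _
  have hv_le : ∀ t, vf t ≤ vmax := fun t => max_le hvmax_pos.le (min_le_left _ _)
  have hv_lip : ∀ x y : ℝ, |vf x - vf y| ≤ rctr * |x - y| := by
    intro x y
    have h1 : |rctr * x - rctr * y| = rctr * |x - y| := by
      rw [← mul_sub, abs_mul, abs_of_pos hc]
    have h2 : |rctr * (T - x) - rctr * (T - y)| = rctr * |x - y| := by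
      rw [← mul_sub, abs_mul, abs_of_pos hc,
        show T - x - (T - y) = -(x - y) by ring, abs_neg]
    calc |vf x - vf y| ≤ max |(0 : ℝ) - 0|
          |min vmax (min (rctr * x) (rctr * (T - x))) -
            min vmax (min (rctr * y) (rctr * (T - y)))| := abs_max_sub_max_le_max _ _ _ _
      _ ≤ max |(0 : ℝ) - 0| (max |vmax - vmax|
          |min (rctr * x) (rctr * (T - x)) - min (rctr * y) (rctr * (T - y))|) := by
          gcongr
          exact abs_min_sub_min_le_max _ _ _ _
      _ ≤ max |(0 : ℝ) - 0| (max |vmax - vmax|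
          (max |rctr * x - rctr * y| |rctr * (T - x) - rctr * (T - y)|)) := by
          gcongr
          exact abs_min_sub_min_le_max _ _ _ _
      _ ≤ rctr * |x - y| := by
          simp only [sub_self, abs_zero, h1, h2, max_self]
          exact max_le (by positivity) (max_le (by positivity) le_rfl)
  set s : ℝ → ℝ := fun t => ∫ x in (0 : ℝ)..t, vf x with hs
  have hint : ∀ x y : ℝ, IntervalIntegrable vf MeasureTheory.volume x y :=
    fun x y => hv_cont.intervalIntegrable x y
  have hs_deriv : ∀ t : ℝ, HasDerivAt s (vf t) t := fun t =>
    intervalIntegral.integral_hasDerivAt_right (hint 0 t)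
      (hv_cont.stronglyMeasurableAtFilter _ _) hv_cont.continuousAt
  set u : EuclideanSpace ℝ (Fin d) := δ⁻¹ • (b - a) with hu
  have hu1 : ‖u‖ = 1 := by
    rw [hu, norm_smul, norm_inv, Real.norm_eq_abs, abs_of_pos hab, ← hδdef,
      inv_mul_cancel₀ hab.ne']
  set p : ℝ → EuclideanSpace ℝ (Fin d) := fun t => a + s t • u with hp
  have hp_deriv : ∀ t : ℝ, HasDerivAt p (vf t • u) t := fun t =>
    ((hs_deriv t).smul_const u).const_add a
  have hderiv : deriv p = fun t => vf t • u := funext fun t => (hp_deriv t).deriv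
  -- value of vf at endpoints
  have hvf0 : vf 0 = 0 := by
    have : min (rctr * 0) (rctr * (T - 0)) = 0 := by
      rw [mul_zero]; exact min_eq_left (mul_nonneg hc.le (by linarith))
    rw [hvf]; simp only [this]
    rw [min_eq_right hvmax_pos.le, max_self]
  have hvfT : vf T = 0 := by
    have : min (rctr * T) (rctr * (T - T)) = 0 := by
      rw [sub_self, mul_zero]; exact min_eq_right (mul_nonneg hc.le hTpos.le)
    rw [hvf]; simp only [this]
    rw [min_eq_right hvmax_pos.le, max_self]
  -- the total distance
  have e1 : (∫ x in (0 : ℝ)..τ, vf x) = rctr * τ ^ 2 / 2 := by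
    rw [intervalIntegral.integral_congr (g := fun t : ℝ => rctr * t) ?_]
    · rw [intervalIntegral.integral_const_mul, integral_id]; ring
    · intro t ht
      rw [Set.uIcc_of_le hτpos.le] at ht
      obtain ⟨ht0, ht1⟩ := ht
      have h1 : rctr * t ≤ rctr * (T - t) := by
        apply mul_le_mul_of_nonneg_left _ hc.le; linarith
      have h2 : rctr * t ≤ vmax := by
        calc rctr * t ≤ rctr * τ := mul_le_mul_of_nonneg_left ht1 hc.le
          _ = vmax := hrτ
      show vf t = rctr * t
      rw [hvf]
      simp only [min_eq_left h1, min_eq_right h2]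
      exact max_eq_right (by positivity)
  have e2 : (∫ x in τ..(T - τ), vf x) = vmax * (T - 2 * τ) := by
    rw [intervalIntegral.integral_congr (g := fun _ : ℝ => vmax) ?_]
    · rw [intervalIntegral.integral_const, smul_eq_mul]; ring
    · intro t ht
      rw [Set.uIcc_of_le (by linarith)] at ht
      obtain ⟨ht0, ht1⟩ := ht
      have h1 : vmax ≤ rctr * t := by
        calc vmax = rctr * τ := hrτ.symm
          _ ≤ rctr * t := mul_le_mul_of_nonneg_left ht0 hc.le
      have h2 : vmax ≤ rctr * (T - t) := by
        calc vmax = rctr * τ := hrτ.symm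
          _ ≤ rctr * (T - t) := mul_le_mul_of_nonneg_left (by linarith) hc.le
      show vf t = vmax
      simp only [hvf]
      rw [min_eq_left (le_min h1 h2)]
      exact max_eq_right hvmax_pos.le
  have e3 : (∫ x in (T - τ)..T, vf x) = rctr * τ ^ 2 / 2 := by
    rw [intervalIntegral.integral_congr (g := fun t : ℝ => rctr * T - rctr * t) ?_]
    · have hi1 : IntervalIntegrable (fun _ : ℝ => rctr * T) MeasureTheory.volume (T - τ) T :=
        intervalIntegrable_const
      have hi2 : IntervalIntegrable (fun x : ℝ => rctr * x) MeasureTheory.volume (T - τ) T :=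
        (continuous_const.mul continuous_id').intervalIntegrable _ _
      rw [intervalIntegral.integral_sub hi1 hi2,
        intervalIntegral.integral_const, intervalIntegral.integral_const_mul, integral_id,
        smul_eq_mul]
      ring
    · intro t ht
      rw [Set.uIcc_of_le (by linarith)] at ht
      obtain ⟨ht0, ht1⟩ := ht
      have h1 : rctr * (T - t) ≤ rctr * t := by
        apply mul_le_mul_of_nonneg_left _ hc.le; linarith
      have h2 : rctr * (T - t) ≤ vmax := by
        calc rctr * (T - t) ≤ rctr * τ := mul_le_mul_of_nonneg_left (by linarith) hc.le
          _ = vmax := hrτ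
      show vf t = rctr * T - rctr * t
      rw [hvf]
      simp only [min_eq_right h1, min_eq_right h2]
      rw [max_eq_right (by nlinarith), mul_sub]
  have hsT : s T = δ := by
    have hsplit1 : (∫ x in (0 : ℝ)..τ, vf x) + ∫ x in τ..T, vf x = ∫ x in (0 : ℝ)..T, vf x :=
      intervalIntegral.integral_add_adjacent_intervals (hint 0 τ) (hint τ T)
    have hsplit2 : (∫ x in τ..(T - τ), vf x) + ∫ x in (T - τ)..T, vf x = ∫ x in τ..T, vf x :=
      intervalIntegral.integral_add_adjacent_intervals (hint τ (T - τ)) (hint (T - τ) T)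
    have : s T = (∫ x in (0 : ℝ)..τ, vf x) + (∫ x in τ..(T - τ), vf x)
        + ∫ x in (T - τ)..T, vf x := by
      simp only [hs]; rw [← hsplit1, ← hsplit2]; ring
    rw [this, e1, e2, e3]
    linear_combination τ * hrτ + key1
  refine ⟨p, ⟨?_, ?_, ?_⟩, ?_, ?_, ?_, ?_⟩
  · rw [contDiff_one_iff_deriv]
    exact ⟨fun t => (hp_deriv t).differentiableAt, by
      rw [hderiv]; exact hv_cont.smul continuous_const⟩
  · intro t
    rw [hderiv]
    simp only
    rw [norm_smul, hu1, mul_one, Real.norm_eq_abs, abs_of_nonneg (hv_nonneg t)]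
    exact (hv_le t).trans hvmax_le
  · rw [hderiv, lipschitzWith_iff_dist_le_mul]
    intro x y
    rw [Real.coe_toNNReal _ hc.le, dist_eq_norm, ← sub_smul, norm_smul, hu1, mul_one,
      Real.norm_eq_abs, Real.dist_eq]
    exact hv_lip x y
  · rw [hp]
    simp only [hs, intervalIntegral.integral_same, zero_smul, add_zero]
  · rw [hp]
    simp only [hsT, hu, smul_smul, mul_inv_cancel₀ hab.ne', one_smul]
    abel
  · rw [hderiv]; simp only [hvf0, zero_smul]
  · rw [hderiv]; simp only [hvfT, zero_smul]
end
end

section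
/- Let d ≥ 1, r_vel > 0, r_ctr > 0, and let p be a feasible trajectory for the double integrator with speed bound r_vel and control bound r_ctr. Let v = ‖p′(0)‖ and let T ≥ 0. If ‖p(T) − p(0)‖ ≥ δ for some δ ≥ 0, then T ≥ √((v/r_ctr)² + 2δ/r_ctr) − v/r_ctr. In particular, the minimum time for a double integrator with initial speed v to travel between two points at distance δ is at least √((v/r_ctr)² + 2δ/r_ctr) − v/r_ctr. -/
noncomputable section

theorem min_time_lower_bound (d : ℕ) (hd : 1 ≤ d) (rvel rctr : ℝ)
    (hv : 0 < rvel) (hc : 0 < rctr)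
    (p : ℝ → EuclideanSpace ℝ (Fin d)) (hp : IsFeasibleTraj d rvel rctr p)
    (T δ : ℝ) (hT : 0 ≤ T) (hδ : 0 ≤ δ) (hdist : δ ≤ ‖p T - p 0‖) :
    Real.sqrt ((‖deriv p 0‖ / rctr) ^ 2 + 2 * δ / rctr) - ‖deriv p 0‖ / rctr ≤ T := by
  obtain ⟨hcd, hvel, hlip⟩ := hp
  set v : ℝ := ‖deriv p 0‖ with hvdef
  have hv0 : 0 ≤ v := norm_nonneg _
  -- speed bound
  have hspeed : ∀ t : ℝ, 0 ≤ t → ‖deriv p t‖ ≤ v + rctr * t := by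
    intro t ht
    have := hlip.dist_le_mul t 0
    rw [Real.coe_toNNReal _ hc.le, dist_eq_norm, dist_eq_norm] at this
    calc ‖deriv p t‖ ≤ ‖deriv p 0‖ + ‖deriv p t - deriv p 0‖ := by
          simpa using norm_add_le (deriv p 0) (deriv p t - deriv p 0)
      _ ≤ v + rctr * t := by
          simp only [sub_zero, Real.norm_eq_abs, abs_of_nonneg ht] at this
          linarith
  -- FTC
  have hderiv : ∀ t : ℝ, HasDerivAt p (deriv p t) t := fun t =>
    (hcd.differentiable one_ne_zero t).hasDerivAt
  have hcont : Continuous (deriv p) := hlip.continuous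
  have hftc : p T - p 0 = ∫ t in (0:ℝ)..T, deriv p t :=
    (intervalIntegral.integral_deriv_eq_sub (fun t _ => hcd.differentiable one_ne_zero t)
      (hcont.intervalIntegrable 0 T)).symm
  have hintg : IntervalIntegrable (fun t => v + rctr * t) MeasureTheory.volume 0 T :=
    (continuous_const.add (continuous_const.mul continuous_id)).intervalIntegrable 0 T
  have hbound : ‖p T - p 0‖ ≤ ∫ t in (0:ℝ)..T, (v + rctr * t) := by
    rw [hftc]
    calc ‖∫ t in (0:ℝ)..T, deriv p t‖ ≤ ∫ t in (0:ℝ)..T, ‖deriv p t‖ :=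
          intervalIntegral.norm_integral_le_integral_norm hT
      _ ≤ ∫ t in (0:ℝ)..T, (v + rctr * t) := by
          apply intervalIntegral.integral_mono_on hT
            (hcont.norm.intervalIntegrable 0 T) hintg
          intro t ht
          exact hspeed t ht.1
  have hval : (∫ t in (0:ℝ)..T, (v + rctr * t)) = v * T + rctr * T ^ 2 / 2 := by
    rw [intervalIntegral.integral_add (f := fun _ => v) (g := fun t => rctr * t) (intervalIntegrable_const)
      ((continuous_const.mul continuous_id').intervalIntegrable 0 T),
      intervalIntegral.integral_const, intervalIntegral.integral_const_mul, integral_id]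
    simp only [smul_eq_mul]
    ring
  have hδle : δ ≤ v * T + rctr * T ^ 2 / 2 := by
    calc δ ≤ ‖p T - p 0‖ := hdist
      _ ≤ _ := hbound
      _ = _ := hval
  -- algebra
  have key : (v / rctr) ^ 2 + 2 * δ / rctr ≤ (T + v / rctr) ^ 2 := by
    have h1 : 2 * δ / rctr ≤ 2 * (v * T + rctr * T ^ 2 / 2) / rctr := by
      gcongr
    have h2 : 2 * (v * T + rctr * T ^ 2 / 2) / rctr = 2 * v * T / rctr + T ^ 2 := by
      field_simp
    have h3 : (T + v / rctr) ^ 2 = T ^ 2 + 2 * v * T / rctr + (v / rctr) ^ 2 := by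
      field_simp; ring
    linarith
  have hTv : 0 ≤ T + v / rctr := by positivity
  have hmain : Real.sqrt ((v / rctr) ^ 2 + 2 * δ / rctr) ≤ T + v / rctr := by
    calc Real.sqrt ((v / rctr) ^ 2 + 2 * δ / rctr)
        ≤ Real.sqrt ((T + v / rctr) ^ 2) := Real.sqrt_le_sqrt key
      _ = T + v / rctr := Real.sqrt_sq hTv
  linarith
end
end

section
/- Let d ≥ 1, r_vel > 0, r_ctr > 0. There exists a constant C > 0 (depending only on d, r_vel, r_ctr) such that for every n ≥ 1 and every set P of n points in the unit cube [0,1]^d ⊂ ℝ^d, there exist a time T ≤ C · n^(1 − 1/(2d)) and a feasible trajectory p for the double integrator with speed bound r_vel and control bound r_ctr such that p(0) = p(T), p′(0) = 0 = p′(T), and every point of P lies on the image p([0,T]). That is, the minimum time to traverse a closed tour of any n points in the unit cube by a double integrator is O(n^(1 − 1/(2d))). -/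
noncomputable section

namespace DITSPaux
open Real Filter
open scoped ContDiff Classical

/-- derivative of a continuous-derivative function vanishes at a boundary point from the left -/
lemma deriv_zero_left (f : ℝ → ℝ) (a : ℝ) (hc : Continuous (deriv f))
    (h : ∀ y < a, deriv f y = 0) : deriv f a = 0 := by
  have h1 : Tendsto (deriv f) (nhdsWithin a (Set.Iio a)) (nhds (deriv f a)) :=
    (hc.continuousAt).continuousWithinAt.tendsto
  have h2 : Tendsto (deriv f) (nhdsWithin a (Set.Iio a)) (nhds 0) := by
    apply Tendsto.congr' _ tendsto_const_nhds
    filter_upwards [self_mem_nhdsWithin] with y hy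
    exact (h y hy).symm
  exact tendsto_nhds_unique h1 h2

lemma deriv_zero_right (f : ℝ → ℝ) (a : ℝ) (hc : Continuous (deriv f))
    (h : ∀ y, a < y → deriv f y = 0) : deriv f a = 0 := by
  have h1 : Tendsto (deriv f) (nhdsWithin a (Set.Ioi a)) (nhds (deriv f a)) :=
    (hc.continuousAt).continuousWithinAt.tendsto
  have h2 : Tendsto (deriv f) (nhdsWithin a (Set.Ioi a)) (nhds 0) := by
    apply Tendsto.congr' _ tendsto_const_nhds
    filter_upwards [self_mem_nhdsWithin] with y hy
    exact (h y hy).symm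
  exact tendsto_nhds_unique h1 h2

abbrev φ : ℝ → ℝ := Real.smoothTransition

lemma φ_contDiff : ContDiff ℝ ∞ φ := Real.smoothTransition.contDiff

lemma φ'_contDiff : ContDiff ℝ ∞ (deriv φ) :=
  (contDiff_infty_iff_deriv.mp φ_contDiff).2

lemma φ''_contDiff : ContDiff ℝ ∞ (deriv (deriv φ)) :=
  (contDiff_infty_iff_deriv.mp φ'_contDiff).2

lemma φ'_zero (x : ℝ) (hx : x ≤ 0 ∨ 1 ≤ x) : deriv φ x = 0 := by
  have hlo : ∀ y < (0:ℝ), deriv φ y = 0 := by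
    intro y hy
    have : φ =ᶠ[nhds y] (fun _ => 0) := by
      filter_upwards [Iio_mem_nhds hy] with z hz
      exact Real.smoothTransition.zero_of_nonpos (le_of_lt hz)
    rw [this.deriv_eq]; exact deriv_const _ _
  have hhi : ∀ y, (1:ℝ) < y → deriv φ y = 0 := by
    intro y hy
    have : φ =ᶠ[nhds y] (fun _ => 1) := by
      filter_upwards [Ioi_mem_nhds hy] with z hz
      exact Real.smoothTransition.one_of_one_le (le_of_lt hz)
    rw [this.deriv_eq]; exact deriv_const _ _
  rcases hx with hx | hx
  · rcases eq_or_lt_of_le hx with rfl | hx'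
    · exact deriv_zero_left φ 0 (φ'_contDiff.continuous) hlo
    · exact hlo x hx'
  · rcases eq_or_lt_of_le hx with rfl | hx'
    · exact deriv_zero_right φ 1 (φ'_contDiff.continuous) hhi
    · exact hhi x hx'

lemma φ''_zero (x : ℝ) (hx : x ≤ 0 ∨ 1 ≤ x) : deriv (deriv φ) x = 0 := by
  have hlo : ∀ y < (0:ℝ), deriv (deriv φ) y = 0 := by
    intro y hy
    have : deriv φ =ᶠ[nhds y] (fun _ => 0) := by
      filter_upwards [Iio_mem_nhds hy] with z hz
      exact φ'_zero z (Or.inl (le_of_lt hz))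
    rw [this.deriv_eq]; exact deriv_const _ _
  have hhi : ∀ y, (1:ℝ) < y → deriv (deriv φ) y = 0 := by
    intro y hy
    have : deriv φ =ᶠ[nhds y] (fun _ => 0) := by
      filter_upwards [Ioi_mem_nhds hy] with z hz
      exact φ'_zero z (Or.inr (le_of_lt hz))
    rw [this.deriv_eq]; exact deriv_const _ _
  rcases hx with hx | hx
  · rcases eq_or_lt_of_le hx with rfl | hx'
    · exact deriv_zero_left _ 0 (φ''_contDiff.continuous) hlo
    · exact hlo x hx'
  · rcases eq_or_lt_of_le hx with rfl | hx'
    · exact deriv_zero_right _ 1 (φ''_contDiff.continuous) hhi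
    · exact hhi x hx'

/-- global bounds on φ' and φ'' -/
lemma φ'_bound : ∃ M : ℝ, 1 ≤ M ∧ ∀ x, ‖deriv φ x‖ ≤ M := by
  obtain ⟨M, hM⟩ := (isCompact_Icc : IsCompact (Set.Icc (0:ℝ) 1)).exists_bound_of_continuousOn
    (φ'_contDiff.continuous.continuousOn)
  refine ⟨max M 1, le_max_right _ _, fun x => ?_⟩
  by_cases hx : x ∈ Set.Icc (0:ℝ) 1
  · exact le_trans (hM x hx) (le_max_left _ _)
  · have : deriv φ x = 0 := by
      apply φ'_zero
      simp only [Set.mem_Icc, not_and_or, not_le] at hx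
      rcases hx with h | h
      · exact Or.inl h.le
      · exact Or.inr h.le
    rw [this]; simpa using le_trans zero_le_one (le_max_right M 1)

lemma φ''_bound : ∃ M : ℝ, 1 ≤ M ∧ ∀ x, ‖deriv (deriv φ) x‖ ≤ M := by
  obtain ⟨M, hM⟩ := (isCompact_Icc : IsCompact (Set.Icc (0:ℝ) 1)).exists_bound_of_continuousOn
    (φ''_contDiff.continuous.continuousOn)
  refine ⟨max M 1, le_max_right _ _, fun x => ?_⟩
  by_cases hx : x ∈ Set.Icc (0:ℝ) 1
  · exact le_trans (hM x hx) (le_max_left _ _)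
  · have : deriv (deriv φ) x = 0 := by
      apply φ''_zero
      simp only [Set.mem_Icc, not_and_or, not_le] at hx
      rcases hx with h | h
      · exact Or.inl h.le
      · exact Or.inr h.le
    rw [this]; simpa using le_trans zero_le_one (le_max_right M 1)


section Glue
variable {E : Type*} [NormedAddCommGroup E] [NormedSpace ℝ E]

lemma sum_single_bound (m : ℕ) (F : ℕ → E) (B : ℝ) (hB : 0 ≤ B)
    (hb : ∀ i < m, ‖F i‖ ≤ B) (t τ : ℝ) (hτ : 0 < τ)
    (hz : ∀ i < m, F i ≠ 0 → ((i:ℝ)*τ < t ∧ t < ((i:ℝ)+1)*τ)) :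
    ‖∑ i ∈ Finset.range m, F i‖ ≤ B := by
  by_cases hE : ∀ i ∈ Finset.range m, F i = 0
  · rw [Finset.sum_eq_zero hE]; simpa using hB
  · push_neg at hE
    obtain ⟨i₀, hi₀m, hi₀⟩ := hE
    rw [Finset.sum_eq_single_of_mem i₀ hi₀m ?_]
    · exact hb i₀ (Finset.mem_range.mp hi₀m)
    · intro i him hne
      by_contra hFi
      obtain ⟨h1, h2⟩ := hz i (Finset.mem_range.mp him) hFi
      obtain ⟨h3, h4⟩ := hz i₀ (Finset.mem_range.mp hi₀m) hi₀
      rcases lt_or_gt_of_ne hne with h | h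
      · have hle : ((i:ℝ)+1) ≤ (i₀:ℝ) := by exact_mod_cast h
        have := mul_le_mul_of_nonneg_right hle hτ.le
        linarith
      · have hle : ((i₀:ℝ)+1) ≤ (i:ℝ) := by exact_mod_cast h
        have := mul_le_mul_of_nonneg_right hle hτ.le
        linarith

lemma glue_traj (m : ℕ) (w : ℕ → E) (τ L M₁ M₂ : ℝ) (hτ : 0 < τ) (hL : 0 ≤ L)
    (hM₁ : ∀ x, ‖deriv φ x‖ ≤ M₁) (hM₂ : ∀ x, ‖deriv (deriv φ) x‖ ≤ M₂)
    (hw : ∀ i < m, ‖w (i+1) - w i‖ ≤ L) :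
    ∃ p : ℝ → E, ContDiff ℝ 1 p ∧
      (∀ t, ‖deriv p t‖ ≤ M₁ * L / τ) ∧
      LipschitzWith (Real.toNNReal (M₂ * L / τ^2)) (deriv p) ∧
      (∀ j : ℕ, j ≤ m → p ((j:ℝ)*τ) = w j) ∧
      (∀ j : ℕ, deriv p ((j:ℝ)*τ) = 0) := by
  have hτ' : τ ≠ 0 := ne_of_gt hτ
  have hM₁0 : 0 ≤ M₁ := le_trans (norm_nonneg _) (hM₁ 0)
  have hM₂0 : 0 ≤ M₂ := le_trans (norm_nonneg _) (hM₂ 0)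
  have hφd : Differentiable ℝ φ := φ_contDiff.differentiable (by simp)
  have hφ'd : Differentiable ℝ (deriv φ) := φ'_contDiff.differentiable (by simp)
  set Δ : ℕ → E := fun i => w (i+1) - w i with hΔ
  set p : ℝ → E := fun t => w 0 + ∑ i ∈ Finset.range m, φ ((t - i*τ)/τ) • Δ i with hp
  set v : ℝ → E := fun t =>
    ∑ i ∈ Finset.range m, (deriv φ ((t - i*τ)/τ) * (1/τ)) • Δ i with hv
  set a : ℝ → E := fun t =>
    ∑ i ∈ Finset.range m, (deriv (deriv φ) ((t - i*τ)/τ) * (1/τ) * (1/τ)) • Δ i with ha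
  have hu : ∀ (c : ℝ) (t : ℝ), HasDerivAt (fun s => (s - c)/τ) (1/τ) t := by
    intro c t
    simpa using ((hasDerivAt_id t).sub_const c).div_const τ
  have hpv : ∀ t, HasDerivAt p (v t) t := by
    intro t
    apply HasDerivAt.const_add
    apply HasDerivAt.fun_sum
    intro i _
    exact ((hφd _).hasDerivAt.comp t (hu ((i:ℝ)*τ) t)).smul_const (Δ i)
  have hva : ∀ t, HasDerivAt v (a t) t := by
    intro t
    apply HasDerivAt.fun_sum
    intro i _
    exact (((hφ'd _).hasDerivAt.comp t (hu ((i:ℝ)*τ) t)).mul_const (1/τ)).smul_const (Δ i)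
  have hderiv_p : deriv p = v := funext fun t => (hpv t).deriv
  have hderiv_v : deriv v = a := funext fun t => (hva t).deriv
  refine ⟨p, ?_, ?_, ?_, ?_, ?_⟩
  · rw [contDiff_one_iff_deriv]
    exact ⟨fun t => (hpv t).differentiableAt, by
      rw [hderiv_p]
      exact continuous_iff_continuousAt.mpr fun t => (hva t).differentiableAt.continuousAt⟩
  · -- speed bound
    intro t
    rw [hderiv_p]
    refine sum_single_bound m _ _ (by positivity) (fun i him => ?_) t τ hτ
      (fun i _ hne => ?_)
    · rw [norm_smul]
      have h1 : ‖deriv φ ((t - i*τ)/τ) * (1/τ)‖ ≤ M₁ * (1/τ) := by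
        have hnτ : ‖(1/τ : ℝ)‖ = 1/τ := by
          rw [Real.norm_eq_abs, abs_of_pos (by positivity)]
        rw [norm_mul, hnτ]
        exact mul_le_mul_of_nonneg_right (hM₁ _) (by positivity)
      calc ‖deriv φ ((t - i*τ)/τ) * (1/τ)‖ * ‖Δ i‖
          ≤ (M₁ * (1/τ)) * L :=
            mul_le_mul h1 (hw i him) (norm_nonneg _) (by positivity)
        _ = M₁ * L / τ := by ring
    · have hder : deriv φ ((t - i*τ)/τ) ≠ 0 := by
        intro h0
        apply hne
        rw [h0, zero_mul, zero_smul]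
      have hmem : 0 < (t - i*τ)/τ ∧ (t - i*τ)/τ < 1 := by
        by_contra hcon
        apply hder
        apply φ'_zero
        rcases not_and_or.mp hcon with h | h
        · exact Or.inl (not_lt.mp h)
        · exact Or.inr (not_lt.mp h)
      have e1 := mul_pos hmem.1 hτ
      rw [div_mul_cancel₀ _ hτ'] at e1
      have e2 := mul_lt_mul_of_pos_right hmem.2 hτ
      rw [div_mul_cancel₀ _ hτ', one_mul] at e2
      constructor <;> linarith
  · -- Lipschitz
    rw [hderiv_p]
    apply lipschitzWith_of_nnnorm_deriv_le (fun t => (hva t).differentiableAt)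
    intro t
    rw [← norm_toNNReal]
    apply Real.toNNReal_mono
    rw [hderiv_v]
    refine sum_single_bound m _ _ (by positivity) (fun i him => ?_) t τ hτ
      (fun i _ hne => ?_)
    · rw [norm_smul]
      have h1 : ‖deriv (deriv φ) ((t - i*τ)/τ) * (1/τ) * (1/τ)‖ ≤ M₂ * (1/τ) * (1/τ) := by
        rw [norm_mul, norm_mul]
        have : ‖(1/τ : ℝ)‖ = 1/τ := by
          rw [Real.norm_eq_abs, abs_of_pos (by positivity)]
        rw [this]
        apply mul_le_mul_of_nonneg_right _ (by positivity)
        exact mul_le_mul_of_nonneg_right (hM₂ _) (by positivity)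
      calc ‖deriv (deriv φ) ((t - i*τ)/τ) * (1/τ) * (1/τ)‖ * ‖Δ i‖
          ≤ (M₂ * (1/τ) * (1/τ)) * L :=
            mul_le_mul h1 (hw i him) (norm_nonneg _) (by positivity)
        _ = M₂ * L / τ^2 := by ring
    · have hder : deriv (deriv φ) ((t - i*τ)/τ) ≠ 0 := by
        intro h0
        apply hne
        rw [h0, zero_mul, zero_mul, zero_smul]
      have hmem : 0 < (t - i*τ)/τ ∧ (t - i*τ)/τ < 1 := by
        by_contra hcon
        apply hder
        apply φ''_zero
        rcases not_and_or.mp hcon with h | h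
        · exact Or.inl (not_lt.mp h)
        · exact Or.inr (not_lt.mp h)
      have e1 := mul_pos hmem.1 hτ
      rw [div_mul_cancel₀ _ hτ'] at e1
      have e2 := mul_lt_mul_of_pos_right hmem.2 hτ
      rw [div_mul_cancel₀ _ hτ', one_mul] at e2
      constructor <;> linarith
  · -- waypoints
    intro j hj
    have key : ∀ i : ℕ, (((j:ℝ))*τ - i*τ)/τ = (j:ℝ) - i := by
      intro i
      field_simp
    rw [hp]
    simp only [key]
    have hsum : ∑ i ∈ Finset.range m, φ ((j:ℝ) - i) • Δ i = ∑ i ∈ Finset.range j, Δ i := by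
      rw [← Finset.sum_subset (Finset.range_subset_range.mpr hj) ?_]
      · apply Finset.sum_congr rfl
        intro i hi
        have hij : i < j := Finset.mem_range.mp hi
        have : (1:ℝ) ≤ (j:ℝ) - i := by
          have : (i:ℝ) + 1 ≤ (j:ℝ) := by exact_mod_cast hij
          linarith
        rw [show φ ((j:ℝ) - i) = 1 from Real.smoothTransition.one_of_one_le this, one_smul]
      · intro i _ hi
        have hij : j ≤ i := by
          by_contra h
          exact hi (Finset.mem_range.mpr (not_le.mp h))
        have : (j:ℝ) - i ≤ 0 := by
          have : (j:ℝ) ≤ (i:ℝ) := by exact_mod_cast hij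
          linarith
        rw [show φ ((j:ℝ) - i) = 0 from Real.smoothTransition.zero_of_nonpos this, zero_smul]
    rw [hsum, Finset.sum_range_sub (fun i => w i)]
    abel
  · -- zero derivative at waypoints
    intro j
    rw [hderiv_p, hv]
    apply Finset.sum_eq_zero
    intro i _
    have key : (((j:ℝ))*τ - i*τ)/τ = (j:ℝ) - i := by field_simp
    rw [key]
    have : deriv φ ((j:ℝ) - i) = 0 := by
      apply φ'_zero
      rcases le_or_gt j i with h | h
      · exact Or.inl (by
          have : (j:ℝ) ≤ (i:ℝ) := by exact_mod_cast h
          linarith)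
      · exact Or.inr (by
          have : (i:ℝ) + 1 ≤ (j:ℝ) := by exact_mod_cast h
          linarith)
    rw [this, zero_mul, zero_smul]

end Glue

/-- boustrophedon (snake) order through the grid of `k^d` cells -/
def snake (k j i : ℕ) : ℕ :=
  if (j / k^(i+1)) % 2 = 0 then (j / k^i) % k else (k-1) - (j / k^i) % k

lemma snake_le (k j i : ℕ) (hk : 1 ≤ k) : snake k j i ≤ k - 1 := by
  unfold snake
  have h : (j / k^i) % k < k := Nat.mod_lt _ (by omega)
  split <;> omega

/-- consecutive snake cells are adjacent in every coordinate -/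
lemma snake_adj (k : ℕ) (hk : 1 ≤ k) (j i : ℕ) :
    snake k (j+1) i ≤ snake k j i + 1 ∧ snake k j i ≤ snake k (j+1) i + 1 := by
  have hk0 : 0 < k := hk
  have hki : 0 < k^i := Nat.pow_pos hk0
  unfold snake
  have hr : j / k^(i+1) = (j / k^i) / k := by
    rw [pow_succ, Nat.div_div_eq_div_mul]
  have hr' : (j+1) / k^(i+1) = ((j+1) / k^i) / k := by
    rw [pow_succ, Nat.div_div_eq_div_mul]
  set q := j / k^i with hq
  set q' := (j+1) / k^i with hq'
  have hmono : q ≤ q' := Nat.div_le_div_right (Nat.le_succ j)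
  have hup : q' ≤ q + 1 := by
    have h1 : j + 1 ≤ j + k^i := by omega
    have h2 : (j + k^i) / k^i = q + 1 := by
      rw [Nat.add_div_right _ hki]
    calc q' = (j+1)/k^i := rfl
      _ ≤ (j + k^i)/k^i := Nat.div_le_div_right h1
      _ = q + 1 := h2
  rcases Nat.eq_or_lt_of_le hmono with heq | hlt
  · -- no change
    rw [hr, hr', ← heq]
    omega
  · have hq1 : q' = q + 1 := by omega
    set s := q % k with hs
    have hsk : s < k := Nat.mod_lt _ hk0
    have hdm : k * (q / k) + s = q := Nat.div_add_mod q k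
    by_cases hcase : s + 1 < k
    · -- no carry at this level
      have hrepr : q + 1 = (s+1) + k * (q / k) := by omega
      have hdiv : (q+1) / k = q / k := by
        rw [hrepr, Nat.add_mul_div_left _ _ hk0, Nat.div_eq_of_lt hcase]
        omega
      have hmod : (q+1) % k = s + 1 := by
        rw [hrepr, Nat.add_mul_mod_self_left, Nat.mod_eq_of_lt hcase]
      rw [hr, hr', hq1, hdiv, hmod]
      have : q % k = s := rfl
      split <;> omega
    · -- carry: s = k - 1
      have hs1 : s + 1 = k := by omega
      have hrepr : q + 1 = k * (q / k + 1) := by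
        have : k * (q / k + 1) = k * (q / k) + k := by ring
        omega
      have hdiv : (q+1) / k = q / k + 1 := by
        rw [hrepr, Nat.mul_div_cancel_left _ hk0]
      have hmod : (q+1) % k = 0 := by
        rw [hrepr, Nat.mul_mod_right]
      rw [hr, hr', hq1, hdiv, hmod]
      have hqk : q % k = s := rfl
      rcases Nat.even_or_odd (q / k) with he | ho
      · have h2 : (q / k) % 2 = 0 := Nat.even_iff.mp he
        have h3 : (q / k + 1) % 2 = 1 := by omega
        simp only [hqk, h2, h3]
        norm_num
        omega
      · have h2 : (q / k) % 2 = 1 := Nat.odd_iff.mp ho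
        have h3 : (q / k + 1) % 2 = 0 := by omega
        simp only [hqk, h2, h3]
        norm_num
        omega

/-- the snake order is injective below `k^d` -/
lemma snake_inj (k d : ℕ) (hk : 1 ≤ k) (j j' : ℕ) (hj : j < k^d) (hj' : j' < k^d)
    (h : ∀ i < d, snake k j i = snake k j' i) : j = j' := by
  have hk0 : 0 < k := hk
  have key : ∀ t, t ≤ d → j / k^(d - t) = j' / k^(d - t) := by
    intro t
    induction t with
    | zero =>
      intro _
      simp only [Nat.sub_zero]
      rw [Nat.div_eq_of_lt hj, Nat.div_eq_of_lt hj']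
    | succ t ih =>
      intro ht
      have ht' : t ≤ d := by omega
      have ihh := ih ht'
      set e := d - (t+1) with he
      have hee : d - t = e + 1 := by omega
      rw [hee] at ihh
      have hi : e < d := by omega
      have hsnake := h e hi
      unfold snake at hsnake
      have h1 : j / k^(e+1) = (j / k^e) / k := by
        rw [pow_succ, Nat.div_div_eq_div_mul]
      have h2 : j' / k^(e+1) = (j' / k^e) / k := by
        rw [pow_succ, Nat.div_div_eq_div_mul]
      have hdiv : (j / k^e) / k = (j' / k^e) / k := by
        rw [← h1, ← h2, ihh]
      rw [ihh] at hsnake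
      have hmod : (j / k^e) % k = (j' / k^e) % k := by
        have ha : (j / k^e) % k < k := Nat.mod_lt _ hk0
        have hb : (j' / k^e) % k < k := Nat.mod_lt _ hk0
        split at hsnake <;> omega
      have e1 := Nat.div_add_mod (j / k^e) k
      have e2 := Nat.div_add_mod (j' / k^e) k
      have e3 : k * ((j / k^e) / k) = k * ((j' / k^e) / k) := by rw [hdiv]
      omega
  have := key d (le_refl d)
  simpa using this

/-- the snake order is surjective onto the grid -/
lemma snake_surj (k d : ℕ) (hk : 1 ≤ k) (c : Fin d → ℕ) (hc : ∀ i, c i < k) :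
    ∃ j < k^d, ∀ i : Fin d, snake k j i = c i := by
  have hcard : Fintype.card (Fin (k^d)) = Fintype.card (Fin d → Fin k) := by
    simp [Fintype.card_fun]
  set S : Fin (k^d) → (Fin d → Fin k) := fun j i =>
    ⟨snake k j i, lt_of_le_of_lt (snake_le k j i hk) (by omega)⟩ with hS
  have hinj : Function.Injective S := by
    intro a b hab
    apply Fin.ext
    apply snake_inj k d hk _ _ a.isLt b.isLt
    intro i hi
    have := congrFun hab ⟨i, hi⟩
    exact congrArg Fin.val this
  have hbij : Function.Bijective S :=
    (Fintype.bijective_iff_injective_and_card S).mpr ⟨hinj, hcard⟩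
  obtain ⟨j, hj⟩ := hbij.2 (fun i => ⟨c i, hc i⟩)
  refine ⟨j, j.isLt, fun i => ?_⟩
  have := congrFun hj i
  exact congrArg Fin.val this


variable {d : ℕ}

def cellOf (d k : ℕ) (x : EuclideanSpace ℝ (Fin d)) : Fin d → ℕ :=
  fun i => min ⌊x i * k⌋₊ (k-1)

def center (d k : ℕ) (c : Fin d → ℕ) : EuclideanSpace ℝ (Fin d) :=
  WithLp.toLp 2 (fun i => ((c i : ℝ) + 1/2)/k)

def InCell (d k : ℕ) (c : Fin d → ℕ) (x : EuclideanSpace ℝ (Fin d)) : Prop :=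
  ∀ i, (c i : ℝ)/k ≤ x i ∧ x i ≤ ((c i : ℝ)+1)/k

lemma center_inCell (k : ℕ) (hk : 1 ≤ k) (c : Fin d → ℕ) :
    InCell d k c (center d k c) := by
  intro i
  have hk0 : (0:ℝ) < k := by exact_mod_cast hk
  unfold center
  simp only [PiLp.toLp_apply]
  constructor
  · gcongr
    linarith
  · gcongr
    linarith

lemma mem_cellOf (k : ℕ) (hk : 1 ≤ k) (x : EuclideanSpace ℝ (Fin d))
    (hx : ∀ i, x i ∈ Set.Icc (0:ℝ) 1) : InCell d k (cellOf d k x) x := by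
  intro i
  have hk0 : (0:ℝ) < k := by exact_mod_cast hk
  obtain ⟨hx0, hx1⟩ := hx i
  have hfl : (↑(min ⌊x i * k⌋₊ (k-1)) : ℝ) ≤ x i * k := by
    have h1 : (↑(min ⌊x i * k⌋₊ (k-1)) : ℝ) ≤ (⌊x i * k⌋₊ : ℝ) := by
      exact_mod_cast Nat.cast_le.mpr (min_le_left _ _)
    exact h1.trans (Nat.floor_le (by positivity))
  have hub : x i * k ≤ (↑(min ⌊x i * k⌋₊ (k-1)) : ℝ) + 1 := by
    rcases min_cases ⌊x i * k⌋₊ (k-1) with ⟨hmin, _⟩ | ⟨hmin, _⟩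
    · rw [hmin]
      exact (Nat.lt_floor_add_one _).le
    · rw [hmin]
      have hcast : ((k-1:ℕ):ℝ) + 1 = (k:ℝ) := by
        push_cast [Nat.cast_sub hk]
        ring
      rw [hcast]
      calc x i * k ≤ 1 * k := mul_le_mul_of_nonneg_right hx1 hk0.le
        _ = (k:ℝ) := by ring
  exact ⟨(div_le_iff₀ hk0).mpr hfl, (le_div_iff₀ hk0).mpr hub⟩

lemma dist_le_of_inCell (k : ℕ) (hk : 1 ≤ k) (c c' : Fin d → ℕ)
    (x y : EuclideanSpace ℝ (Fin d)) (hx : InCell d k c x) (hy : InCell d k c' y)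
    (hadj : ∀ i, c i ≤ c' i + 1 ∧ c' i ≤ c i + 1) :
    dist x y ≤ Real.sqrt d * (2/k) := by
  have hk0 : (0:ℝ) < k := by exact_mod_cast hk
  have hcoord : ∀ i, |x i - y i| ≤ 2/k := by
    intro i
    obtain ⟨hx1, hx2⟩ := hx i
    obtain ⟨hy1, hy2⟩ := hy i
    obtain ⟨ha1, ha2⟩ := hadj i
    have hc1 : (c i : ℝ) ≤ (c' i : ℝ) + 1 := by exact_mod_cast ha1
    have hc2 : (c' i : ℝ) ≤ (c i : ℝ) + 1 := by exact_mod_cast ha2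
    rw [abs_sub_le_iff]
    constructor
    · calc x i - y i ≤ ((c i:ℝ)+1)/k - (c' i:ℝ)/k := sub_le_sub hx2 hy1
        _ = ((c i:ℝ) + 1 - c' i)/k := by ring
        _ ≤ 2/k := by gcongr; linarith
    · calc y i - x i ≤ ((c' i:ℝ)+1)/k - (c i:ℝ)/k := sub_le_sub hy2 hx1
        _ = ((c' i:ℝ) + 1 - c i)/k := by ring
        _ ≤ 2/k := by gcongr; linarith
  rw [EuclideanSpace.dist_eq]
  have hsum : ∑ i, dist (x i) (y i)^2 ≤ (d:ℝ) * (2/k)^2 := by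
    calc ∑ i, dist (x i) (y i)^2 ≤ ∑ _i : Fin d, ((2:ℝ)/k)^2 := by
          apply Finset.sum_le_sum
          intro i _
          apply pow_le_pow_left₀ dist_nonneg
          rw [Real.dist_eq]
          exact hcoord i
      _ = (d:ℝ) * (2/k)^2 := by
          rw [Finset.sum_const, Finset.card_univ, Fintype.card_fin, nsmul_eq_mul]
  calc Real.sqrt (∑ i, dist (x i) (y i)^2) ≤ Real.sqrt ((d:ℝ) * (2/k)^2) :=
        Real.sqrt_le_sqrt hsum
    _ = Real.sqrt d * (2/k) := by
        rw [Real.sqrt_mul (by positivity), Real.sqrt_sq (by positivity)]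


section Lists

def snakeVec (d k j : ℕ) : Fin d → ℕ := fun i => snake k j i

def blockL (d k : ℕ) (P : Finset (EuclideanSpace ℝ (Fin d))) (j : ℕ) :
    List (EuclideanSpace ℝ (Fin d)) :=
  center d k (snakeVec d k j) ::
    (P.filter (fun x => cellOf d k x = snakeVec d k j)).toList

lemma blockL_ne_nil (k : ℕ) (P : Finset (EuclideanSpace ℝ (Fin d))) (j : ℕ) :
    blockL d k P j ≠ [] := by simp [blockL]

lemma mem_blockL_inCell (k : ℕ) (hk : 1 ≤ k) (P : Finset (EuclideanSpace ℝ (Fin d)))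
    (hP : ∀ x ∈ P, ∀ i, x i ∈ Set.Icc (0:ℝ) 1) (j : ℕ) :
    ∀ z ∈ blockL d k P j, InCell d k (snakeVec d k j) z := by
  intro z hz
  rcases List.mem_cons.mp hz with rfl | hz
  · exact center_inCell k hk _
  · rw [Finset.mem_toList, Finset.mem_filter] at hz
    obtain ⟨hzP, hcell⟩ := hz
    have := mem_cellOf k hk z (hP z hzP)
    rwa [hcell] at this

/-- chain over flatMap of blocks -/
lemma chain'_flatMap_range {α : Type*} (R : α → α → Prop) (f : ℕ → List α) (N : ℕ)
    (hne : ∀ j, f j ≠ [])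
    (hc : ∀ j, (f j).IsChain R)
    (hlink : ∀ j, R ((f j).getLast (hne j)) ((f (j+1)).head (hne (j+1)))) :
    ((List.range N).flatMap f).IsChain R ∧
      (∀ h : N ≠ 0, ((List.range N).flatMap f).getLast? = (f (N-1)).getLast?) := by
  induction N with
  | zero => simp
  | succ N ih =>
    rw [List.range_succ, List.flatMap_append, List.flatMap_singleton]
    constructor
    · rw [List.isChain_append]
      refine ⟨ih.1, hc N, ?_⟩
      intro x hx y hy
      rcases Nat.eq_zero_or_pos N with rfl | hN
      · simp at hx
      · rw [ih.2 (by omega), List.getLast?_eq_getLast_of_ne_nil (hne (N-1))] at hx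
        rw [List.head?_eq_head (hne N)] at hy
        have hx' : x = (f (N-1)).getLast (hne (N-1)) := by
          simpa using hx.symm
        have hy' : y = (f N).head (hne N) := by simpa using hy.symm
        rw [hx', hy']
        have := hlink (N-1)
        rwa [Nat.sub_add_cancel hN] at this
    · intro _
      rw [List.getLast?_append_of_ne_nil _ (hne N)]
      simp

end Lists

lemma list_sum_range_map (g : ℕ → ℕ) (N : ℕ) :
    ((List.range N).map g).sum = ∑ j ∈ Finset.range N, g j := by
  induction N with
  | zero => simp
  | succ N ih => simp [List.range_succ, Finset.sum_range_succ, ih]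

lemma exists_waypoints (k : ℕ) (hk : 1 ≤ k) (P : Finset (EuclideanSpace ℝ (Fin d)))
    (hP : ∀ x ∈ P, ∀ i, x i ∈ Set.Icc (0:ℝ) 1) :
    ∃ (m : ℕ) (w : ℕ → EuclideanSpace ℝ (Fin d)),
      1 ≤ m ∧ (m : ℝ) ≤ 2 * ((k^d : ℕ) + P.card) ∧
      (∀ i < m, dist (w i) (w (i+1)) ≤ Real.sqrt d * (2/k)) ∧
      w m = w 0 ∧
      (∀ x ∈ P, ∃ i < m, w i = x) := by
  classical
  set B := Real.sqrt d * (2/k) with hB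
  have hB0 : 0 ≤ B := by positivity
  set R : EuclideanSpace ℝ (Fin d) → EuclideanSpace ℝ (Fin d) → Prop :=
    fun a b => dist a b ≤ B with hR
  set e₀ : EuclideanSpace ℝ (Fin d) := center d k (snakeVec d k 0) with he₀
  set bl : ℕ → List (EuclideanSpace ℝ (Fin d)) := blockL d k P with hbl
  have hne : ∀ j, bl j ≠ [] := blockL_ne_nil k P
  have hincell : ∀ j, ∀ z ∈ bl j, InCell d k (snakeVec d k j) z :=
    fun j => mem_blockL_inCell k hk P hP j
  have hcblock : ∀ j, (bl j).IsChain R := by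
    intro j
    apply List.Pairwise.isChain
    apply List.pairwise_of_forall_mem_list
    intro a ha b hb
    exact dist_le_of_inCell k hk _ _ a b (hincell j a ha) (hincell j b hb)
      (fun i => by omega)
  have hhead : ∀ j, (bl j).head (hne j) = center d k (snakeVec d k j) := by
    intro j
    simp [hbl, blockL]
  have hlink : ∀ j, R ((bl j).getLast (hne j)) ((bl (j+1)).head (hne (j+1))) := by
    intro j
    rw [hhead (j+1)]
    apply dist_le_of_inCell k hk (snakeVec d k j) (snakeVec d k (j+1)) _ _
      (hincell j _ (List.getLast_mem (hne j))) (center_inCell k hk _)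
    intro i
    have := snake_adj k hk j i
    constructor
    · exact this.2
    · exact this.1
  set tourL : List (EuclideanSpace ℝ (Fin d)) := (List.range (k^d)).flatMap bl with htour
  have hNpos : k^d ≠ 0 := by positivity
  obtain ⟨hchainT, hlastT⟩ := chain'_flatMap_range R bl (k^d) hne hcblock hlink
  have hheadT : tourL.head? = some e₀ := by
    obtain ⟨t, ht⟩ : ∃ t, k^d = t + 1 := ⟨k^d - 1, by omega⟩
    rw [htour, ht, List.range_succ_eq_map, List.flatMap_cons]
    have : bl 0 = e₀ :: (P.filter (fun x => cellOf d k x = snakeVec d k 0)).toList := rfl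
    rw [this, List.cons_append, List.head?_cons]
  have htourne : tourL ≠ [] := by
    intro h
    rw [h] at hheadT
    simp at hheadT
  set fullL : List (EuclideanSpace ℝ (Fin d)) := tourL ++ tourL.reverse with hfull
  have hrevne : tourL.reverse ≠ [] := by
    simpa using htourne
  have hchainF : fullL.IsChain R := by
    rw [hfull, List.isChain_append]
    refine ⟨hchainT, ?_, ?_⟩
    · rw [List.isChain_reverse]
      apply hchainT.imp
      intro a b h
      show dist b a ≤ B
      rwa [dist_comm]
    · intro x hx y hy
      have : tourL.reverse.head? = tourL.getLast? := by
        rw [← List.getLast?_eq_head?_reverse]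
      rw [this] at hy
      have hxy : x = y := Option.mem_unique hx hy
      rw [hxy]
      show dist y y ≤ B
      simp [hB0]
  -- getLast of fullL is e₀
  have hlastF : fullL.getLast? = some e₀ := by
    rw [hfull, List.getLast?_append_of_ne_nil _ hrevne,
      List.getLast?_eq_head?_reverse, List.reverse_reverse, hheadT]
  -- length bound
  have hcount : ∑ j ∈ Finset.range (k^d),
      (P.filter (fun x => cellOf d k x = snakeVec d k j)).card ≤ P.card := by
    have hone : ∀ x ∈ P,
        (Finset.filter (fun j => cellOf d k x = snakeVec d k j)
          (Finset.range (k^d))).card ≤ 1 := by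
      intro x _
      rw [Finset.card_le_one]
      intro j1 hj1 j2 hj2
      rw [Finset.mem_filter, Finset.mem_range] at hj1 hj2
      apply snake_inj k d hk _ _ hj1.1 hj2.1
      intro i hi
      have h1 := congrFun hj1.2 ⟨i, hi⟩
      have h2 := congrFun hj2.2 ⟨i, hi⟩
      exact h1.symm.trans h2
    calc ∑ j ∈ Finset.range (k^d), (P.filter (fun x => cellOf d k x = snakeVec d k j)).card
        = ∑ j ∈ Finset.range (k^d), ∑ x ∈ P,
            (if cellOf d k x = snakeVec d k j then 1 else 0) := by
          simp only [Finset.card_filter]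
      _ = ∑ x ∈ P, ∑ j ∈ Finset.range (k^d),
            (if cellOf d k x = snakeVec d k j then 1 else 0) := Finset.sum_comm
      _ = ∑ x ∈ P, (Finset.filter (fun j => cellOf d k x = snakeVec d k j)
            (Finset.range (k^d))).card := by
          simp only [Finset.card_filter]
      _ ≤ ∑ _x ∈ P, 1 := Finset.sum_le_sum hone
      _ = P.card := by simp
  have hlenT : tourL.length ≤ k^d + P.card := by
    rw [htour, List.length_flatMap, list_sum_range_map]
    have : ∀ j, (bl j).length =
        1 + (P.filter (fun x => cellOf d k x = snakeVec d k j)).card := by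
      intro j
      simp [hbl, blockL, Nat.add_comm]
    calc ∑ j ∈ Finset.range (k^d), (bl j).length
        = ∑ j ∈ Finset.range (k^d),
            (1 + (P.filter (fun x => cellOf d k x = snakeVec d k j)).card) := by
          apply Finset.sum_congr rfl
          intro j _
          exact this j
      _ = k^d + ∑ j ∈ Finset.range (k^d),
            (P.filter (fun x => cellOf d k x = snakeVec d k j)).card := by
          rw [Finset.sum_add_distrib]
          simp
      _ ≤ k^d + P.card := by omega
  -- membership
  have hmemT : ∀ x ∈ P, x ∈ tourL := by
    intro x hx
    obtain ⟨j, hj, hji⟩ := snake_surj k d hk (cellOf d k x)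
      (fun i => by
        have : min ⌊x i * k⌋₊ (k-1) ≤ k - 1 := min_le_right _ _
        simp only [cellOf]
        omega)
    rw [htour, List.mem_flatMap]
    refine ⟨j, by simpa using hj, ?_⟩
    rw [hbl]
    unfold blockL
    apply List.mem_cons_of_mem
    rw [Finset.mem_toList, Finset.mem_filter]
    exact ⟨hx, funext fun i => (hji i).symm⟩
  -- assemble
  refine ⟨fullL.length, fun i => fullL.getD i e₀, ?_, ?_, ?_, ?_, ?_⟩
  · have : fullL ≠ [] := by
      intro h
      rw [hfull] at h
      exact htourne (List.append_eq_nil_iff.mp h).1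
    have := List.length_pos_iff.mpr this
    omega
  · have : fullL.length = tourL.length + tourL.length := by
      rw [hfull, List.length_append, List.length_reverse]
    rw [this]
    push_cast
    have : (tourL.length : ℝ) ≤ (k^d : ℕ) + P.card := by exact_mod_cast hlenT
    push_cast at this
    linarith
  · intro i hi
    show dist (fullL.getD i e₀) (fullL.getD (i+1) e₀) ≤ B
    rcases lt_or_ge (i+1) fullL.length with hi1 | hi1
    · rw [List.getD_eq_getElem (hn := hi), List.getD_eq_getElem (hn := hi1)]
      exact List.isChain_iff_getElem.mp hchainF i (by omega)
    · have hi1' : i + 1 = fullL.length := by omega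
      have hgd1 : fullL.getD (i+1) e₀ = e₀ := by
        apply List.getD_eq_default
        omega
      have hlast : fullL.getD i e₀ = e₀ := by
        have hnn : fullL ≠ [] := by
          intro h; rw [h] at hi; simp at hi
        have hgl : fullL.getLast hnn = e₀ := by
          have := hlastF
          rw [List.getLast?_eq_getLast_of_ne_nil hnn] at this
          exact Option.some_inj.mp this
        rw [List.getD_eq_getElem (hn := hi), ← hgl, List.getLast_eq_getElem]
        simp only [show i = fullL.length - 1 by omega]
      rw [hgd1, hlast]
      simp [hB0]
  · show fullL.getD fullL.length e₀ = fullL.getD 0 e₀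
    obtain ⟨a, l, hal⟩ := List.exists_cons_of_ne_nil htourne
    have ha : a = e₀ := by
      rw [hal] at hheadT
      simpa using hheadT
    have h0 : fullL.getD 0 e₀ = e₀ := by
      rw [hfull, hal, List.cons_append, List.getD_cons_zero, ha]
    rw [List.getD_eq_default _ _ (le_refl _), h0]
  · intro x hx
    have hxF : x ∈ fullL := by
      rw [hfull, List.mem_append]
      exact Or.inl (hmemT x hx)
    obtain ⟨idx, hidx⟩ := List.mem_iff_get.mp hxF
    refine ⟨idx, idx.isLt, ?_⟩
    show fullL.getD (idx : ℕ) e₀ = x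
    rw [List.getD_eq_getElem (hn := idx.isLt)]
    exact hidx


end DITSPaux

open DITSPaux

theorem worst_case_DITSP_upper_bound (d : ℕ) (hd : 1 ≤ d) (rvel rctr : ℝ)
    (hv : 0 < rvel) (hc : 0 < rctr) :
    ∃ C : ℝ, 0 < C ∧ ∀ n : ℕ, 1 ≤ n →
      ∀ P : Finset (EuclideanSpace ℝ (Fin d)),
        P.card = n →
        (∀ x ∈ P, ∀ i, x i ∈ Set.Icc (0 : ℝ) 1) →
        ∃ (T : ℝ) (p : ℝ → EuclideanSpace ℝ (Fin d)),
          0 ≤ T ∧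
          T ≤ C * (n : ℝ) ^ ((1 : ℝ) - 1 / (2 * (d : ℝ))) ∧
          IsFeasibleTraj d rvel rctr p ∧
          p 0 = p T ∧ deriv p 0 = 0 ∧ deriv p T = 0 ∧
          ∀ x ∈ P, ∃ τ ∈ Set.Icc (0 : ℝ) T, p τ = x := by
  obtain ⟨M₁, hM₁1, hM₁⟩ := φ'_bound
  obtain ⟨M₂, hM₂1, hM₂⟩ := φ''_bound
  have hd0 : (0:ℝ) < d := by exact_mod_cast hd
  have hsd : 0 < Real.sqrt d := Real.sqrt_pos.mpr hd0
  set A : ℝ := 2 * M₁ * Real.sqrt d / rvel with hA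
  set Bc : ℝ := Real.sqrt (2 * M₂ * Real.sqrt d / rctr) with hBc
  have hA0 : 0 < A := by positivity
  have hBc0 : 0 ≤ Bc := Real.sqrt_nonneg _
  refine ⟨4 * (A + Bc) * 2^d, by positivity, ?_⟩
  intro n hn P hcard hP
  have hn0 : (0:ℝ) < n := by exact_mod_cast hn
  have hn1 : (1:ℝ) ≤ n := by exact_mod_cast hn
  set e : ℝ := 1 / (2 * (d:ℝ)) with he
  set k : ℕ := ⌈(n:ℝ) ^ ((d:ℝ)⁻¹)⌉₊ with hkdef
  have hnr1 : (1:ℝ) ≤ (n:ℝ) ^ ((d:ℝ)⁻¹) := by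
    calc (1:ℝ) = (1:ℝ) ^ ((d:ℝ)⁻¹) := (Real.one_rpow _).symm
      _ ≤ (n:ℝ) ^ ((d:ℝ)⁻¹) := Real.rpow_le_rpow zero_le_one hn1 (by positivity)
  have hk1 : 1 ≤ k := Nat.one_le_ceil_iff.mpr (by positivity)
  have hkr1 : (1:ℝ) ≤ (k:ℝ) := by exact_mod_cast hk1
  have hklb : (n:ℝ) ^ ((d:ℝ)⁻¹) ≤ (k:ℝ) := Nat.le_ceil _
  have hkub : (k:ℝ) ≤ 2 * (n:ℝ) ^ ((d:ℝ)⁻¹) := by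
    have h1 : (k:ℝ) < (n:ℝ) ^ ((d:ℝ)⁻¹) + 1 := Nat.ceil_lt_add_one (by positivity)
    linarith
  have hpowid : (((n:ℝ) ^ ((d:ℝ)⁻¹)) : ℝ) ^ (d:ℕ) = (n:ℝ) := by
    rw [← Real.rpow_natCast ((n:ℝ) ^ ((d:ℝ)⁻¹)) d, ← Real.rpow_mul (le_of_lt hn0),
      inv_mul_cancel₀ (ne_of_gt hd0), Real.rpow_one]
  have hkdR : (n:ℝ) ≤ (k:ℝ) ^ (d:ℕ) := by
    calc (n:ℝ) = (((n:ℝ) ^ ((d:ℝ)⁻¹)) : ℝ) ^ (d:ℕ) := hpowid.symm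
      _ ≤ (k:ℝ) ^ (d:ℕ) := pow_le_pow_left₀ (by positivity) hklb d
  obtain ⟨m, w, hm1, hm2, hwdist, hwclose, hwmem⟩ := exists_waypoints k hk1 P hP
  rw [hcard] at hm2
  set Lmax : ℝ := Real.sqrt d * (2 / k) with hLmax
  have hLmax0 : 0 < Lmax := by positivity
  set τ : ℝ := max (M₁ * Lmax / rvel) (Real.sqrt (M₂ * Lmax / rctr)) with hτ
  have hτ1 : M₁ * Lmax / rvel ≤ τ := le_max_left _ _
  have hτ2 : Real.sqrt (M₂ * Lmax / rctr) ≤ τ := le_max_right _ _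
  have hτ0 : 0 < τ := lt_of_lt_of_le (by positivity) hτ1
  have hspeedc : M₁ * Lmax / τ ≤ rvel := by
    rw [div_le_iff₀ hτ0]
    calc M₁ * Lmax = rvel * (M₁ * Lmax / rvel) := by field_simp
      _ ≤ rvel * τ := mul_le_mul_of_nonneg_left hτ1 hv.le
  have haccelc : M₂ * Lmax / τ^2 ≤ rctr := by
    rw [div_le_iff₀ (by positivity)]
    have hsq : M₂ * Lmax / rctr ≤ τ^2 := by
      calc M₂ * Lmax / rctr = Real.sqrt (M₂ * Lmax / rctr)^2 := by
            rw [Real.sq_sqrt (by positivity)]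
        _ ≤ τ^2 := pow_le_pow_left₀ (Real.sqrt_nonneg _) hτ2 2
    calc M₂ * Lmax = rctr * (M₂ * Lmax / rctr) := by field_simp
      _ ≤ rctr * τ^2 := mul_le_mul_of_nonneg_left hsq hc.le
  have hw' : ∀ i < m, ‖w (i+1) - w i‖ ≤ Lmax := by
    intro i hi
    rw [norm_sub_rev, ← dist_eq_norm]
    exact hwdist i hi
  obtain ⟨p, hpC1, hpspeed, hplip, hpway, hpder0⟩ :=
    glue_traj m w τ Lmax M₁ M₂ hτ0 hLmax0.le hM₁ hM₂ hw'
  refine ⟨(m:ℝ) * τ, p, by positivity, ?_, ?_, ?_, ?_, ?_, ?_⟩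
  · -- time bound
    have hsk : 0 < Real.sqrt k := Real.sqrt_pos.mpr (by positivity)
    have h1k : (1:ℝ) ≤ Real.sqrt k := by
      rw [show (1:ℝ) = Real.sqrt 1 by simp]
      exact Real.sqrt_le_sqrt hkr1
    have hskk : Real.sqrt k ≤ (k:ℝ) := by
      nlinarith [Real.mul_self_sqrt (by positivity : (0:ℝ) ≤ (k:ℝ))]
    have hτle : τ ≤ (A + Bc) / Real.sqrt k := by
      apply max_le
      · have h1 : M₁ * Lmax / rvel = A / k := by
          rw [hA, hLmax]; field_simp
        rw [h1]
        calc A / k ≤ A / Real.sqrt k := by gcongr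
          _ ≤ (A + Bc) / Real.sqrt k := by gcongr; linarith
      · have h2 : M₂ * Lmax / rctr = (2 * M₂ * Real.sqrt d / rctr) * (k:ℝ)⁻¹ := by
          rw [hLmax]; field_simp
        rw [h2, Real.sqrt_mul (by positivity), Real.sqrt_inv]
        calc Bc * (Real.sqrt k)⁻¹ = Bc / Real.sqrt k := by ring
          _ ≤ (A + Bc) / Real.sqrt k := by gcongr; linarith
    have hm4 : (m:ℝ) ≤ 4 * (k:ℝ)^(d:ℕ) := by
      have hcast : ((k^d : ℕ):ℝ) = (k:ℝ)^(d:ℕ) := by push_cast; ring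
      calc (m:ℝ) ≤ 2*(((k^d:ℕ):ℝ) + n) := hm2
        _ = 2*((k:ℝ)^(d:ℕ) + n) := by rw [hcast]
        _ ≤ 2*((k:ℝ)^(d:ℕ) + (k:ℝ)^(d:ℕ)) := by linarith
        _ = 4 * (k:ℝ)^(d:ℕ) := by ring
    have hkd2 : (k:ℝ)^(d:ℕ) ≤ 2^d * n := by
      calc (k:ℝ)^(d:ℕ) ≤ (2 * (n:ℝ)^((d:ℝ)⁻¹))^(d:ℕ) :=
            pow_le_pow_left₀ (by positivity) hkub d
        _ = 2^d * ((n:ℝ)^((d:ℝ)⁻¹))^(d:ℕ) := mul_pow _ _ _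
        _ = 2^d * n := by rw [hpowid]
    have hsqrtk : (n:ℝ)^e ≤ Real.sqrt k := by
      have h1 : Real.sqrt ((n:ℝ)^((d:ℝ)⁻¹)) ≤ Real.sqrt k := Real.sqrt_le_sqrt hklb
      have h2 : Real.sqrt ((n:ℝ)^((d:ℝ)⁻¹)) = (n:ℝ)^e := by
        rw [Real.sqrt_eq_rpow, ← Real.rpow_mul hn0.le]
        congr 1
        rw [he]
        ring
      linarith
    have hne0 : (0:ℝ) < (n:ℝ)^e := by positivity
    calc (m:ℝ) * τ ≤ (4 * (k:ℝ)^(d:ℕ)) * ((A + Bc) / Real.sqrt k) := by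
          apply mul_le_mul hm4 hτle hτ0.le (by positivity)
      _ ≤ (4 * (2^d * n)) * ((A + Bc) / (n:ℝ)^e) := by
          gcongr
      _ = (4 * (A + Bc) * 2^d) * ((n:ℝ) / (n:ℝ)^e) := by ring
      _ = (4 * (A + Bc) * 2^d) * (n:ℝ)^(1 - e) := by
          rw [Real.rpow_sub hn0, Real.rpow_one]
  · exact ⟨hpC1, fun t => le_trans (hpspeed t) hspeedc,
      hplip.weaken (Real.toNNReal_mono haccelc)⟩
  · have h0 : p 0 = w 0 := by
      have := hpway 0 (Nat.zero_le m)
      simpa using this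
    have hT : p ((m:ℝ) * τ) = w m := hpway m (le_refl m)
    rw [h0, hT, hwclose]
  · have := hpder0 0
    simpa using this
  · exact hpder0 m
  · intro x hx
    obtain ⟨i, him, hwi⟩ := hwmem x hx
    refine ⟨(i:ℝ) * τ, ⟨by positivity, ?_⟩, ?_⟩
    · apply mul_le_mul_of_nonneg_right _ hτ0.le
      exact_mod_cast him.le
    · rw [hpway i him.le, hwi]
end
end

section
/- Let r_vel > 0, r_ctr > 0, and let v₀ ∈ ℝ³ with ‖v₀‖ ≤ r_vel. For t > 0, let R_t ⊆ ℝ³ be the set of points reachable within time t by the double integrator started at the origin with initial velocity v₀, i.e. R_t = { x ∈ ℝ³ : there exist a feasible trajectory p for the double integrator with speed bound r_vel and control bound r_ctr with p(0) = 0 and p′(0) = v₀, and a time τ ∈ [0,t], such that p(τ) = x }. Then limsup_{t → 0⁺} (Lebesgue measure of R_t)/t⁵ ≤ (π · r_ctr² · r_vel)/20; equivalently, Volume(R_t) ≤ (π·r_ctr²·r_vel·t⁵)/20 + o(t⁵) as t → 0⁺. -/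
open MeasureTheory Filter

noncomputable section

/-- The set of points reachable within time `t` by a double integrator started at the
origin with initial velocity `v₀`. -/
def ReachSet3 (rvel rctr : ℝ) (v₀ : EuclideanSpace ℝ (Fin 3)) (t : ℝ) :
    Set (EuclideanSpace ℝ (Fin 3)) :=
  {x | ∃ p : ℝ → EuclideanSpace ℝ (Fin 3),
    IsFeasibleTraj 3 rvel rctr p ∧ p 0 = 0 ∧ deriv p 0 = v₀ ∧
    ∃ τ ∈ Set.Icc (0 : ℝ) t, p τ = x}

lemma disk_vol (r : ℝ) (hr : 0 ≤ r) :
    volume {z : Fin 2 → ℝ | (z 0)^2 + (z 1)^2 ≤ r^2} = ENNReal.ofReal (Real.pi * r^2) := by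
  have hmp := (EuclideanSpace.volume_preserving_symm_measurableEquiv_toLp (Fin 2)).symm
  have hset : {z : Fin 2 → ℝ | (z 0)^2 + (z 1)^2 ≤ r^2}
      = (MeasurableEquiv.toLp 2 (Fin 2 → ℝ)).symm.symm ⁻¹'
        (Metric.closedBall (0 : EuclideanSpace ℝ (Fin 2)) r) := by
    ext z
    simp only [Set.mem_setOf_eq, Set.mem_preimage, Metric.mem_closedBall, dist_zero_right]
    rw [EuclideanSpace.norm_eq, Fin.sum_univ_two]
    have e0 : ‖(MeasurableEquiv.toLp 2 (Fin 2 → ℝ)).symm.symm z 0‖ = ‖z 0‖ := rfl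
    have e1 : ‖(MeasurableEquiv.toLp 2 (Fin 2 → ℝ)).symm.symm z 1‖ = ‖z 1‖ := rfl
    rw [e0, e1]
    have hn : ‖z 0‖^2 + ‖z 1‖^2 = z 0^2 + z 1^2 := by
      simp [Real.norm_eq_abs, sq_abs]
    rw [hn]
    constructor
    · intro h
      calc Real.sqrt (z 0^2 + z 1^2) ≤ Real.sqrt (r^2) := Real.sqrt_le_sqrt h
        _ = r := Real.sqrt_sq hr
    · intro h
      nlinarith [Real.sq_sqrt (show (0:ℝ) ≤ z 0^2 + z 1^2 by positivity),
        Real.sqrt_nonneg (z 0^2 + z 1^2)]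
  rw [hset, hmp.measure_preimage measurableSet_closedBall.nullMeasurableSet,
    EuclideanSpace.volume_closedBall]
  simp only [Fintype.card_fin]
  rw [Real.sq_sqrt Real.pi_nonneg]
  rw [show ((2:ℕ):ℝ)/2 + 1 = 2 by norm_num, Real.Gamma_two]
  rw [← ENNReal.ofReal_pow hr, ← ENNReal.ofReal_mul (by positivity)]
  ring_nf

lemma cyl_vol_pi (a b r : ℝ) (hr : 0 ≤ r) :
    volume {y : Fin 3 → ℝ | y 0 ∈ Set.Icc a b ∧ (y 1)^2 + (y 2)^2 ≤ r^2}
      = ENNReal.ofReal (b - a) * ENNReal.ofReal (Real.pi * r^2) := by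
  have hmp := MeasureTheory.volume_preserving_piFinSuccAbove (fun _ : Fin 3 => ℝ) 0
  have hset : {y : Fin 3 → ℝ | y 0 ∈ Set.Icc a b ∧ (y 1)^2 + (y 2)^2 ≤ r^2}
      = (MeasurableEquiv.piFinSuccAbove (fun _ : Fin 3 => ℝ) 0) ⁻¹'
        (Set.Icc a b ×ˢ {z : Fin 2 → ℝ | (z 0)^2 + (z 1)^2 ≤ r^2}) := by
    ext y
    simp only [Set.mem_setOf_eq, Set.mem_preimage, Set.mem_prod,
      MeasurableEquiv.piFinSuccAbove_apply]
    rfl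
  rw [hset, hmp.measure_preimage ?_, ← disk_vol r hr]
  · rw [MeasureTheory.Measure.volume_eq_prod, MeasureTheory.Measure.prod_prod,
      Real.volume_Icc]
  · exact (measurableSet_Icc.prod (by
      apply measurableSet_le <;> fun_prop)).nullMeasurableSet

lemma piSet_meas (a b r : ℝ) :
    MeasurableSet {y : Fin 3 → ℝ | y 0 ∈ Set.Icc a b ∧ (y 1)^2 + (y 2)^2 ≤ r^2} := by
  apply MeasurableSet.inter
  · exact measurable_pi_apply 0 measurableSet_Icc
  · show MeasurableSet {y : Fin 3 → ℝ | (y 1)^2 + (y 2)^2 ≤ r^2}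
    apply measurableSet_le <;> fun_prop

lemma cyl_vol (B : OrthonormalBasis (Fin 3) ℝ (EuclideanSpace ℝ (Fin 3))) (a b r : ℝ)
    (hr : 0 ≤ r) :
    volume {x : EuclideanSpace ℝ (Fin 3) |
        B.repr x 0 ∈ Set.Icc a b ∧ (B.repr x 1)^2 + (B.repr x 2)^2 ≤ r^2}
      = ENNReal.ofReal (b - a) * ENNReal.ofReal (Real.pi * r^2) := by
  have hset : {x : EuclideanSpace ℝ (Fin 3) |
        B.repr x 0 ∈ Set.Icc a b ∧ (B.repr x 1)^2 + (B.repr x 2)^2 ≤ r^2}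
      = B.repr ⁻¹' ((MeasurableEquiv.toLp 2 (Fin 3 → ℝ)).symm ⁻¹'
          {y : Fin 3 → ℝ | y 0 ∈ Set.Icc a b ∧ (y 1)^2 + (y 2)^2 ≤ r^2}) := rfl
  rw [hset, B.measurePreserving_repr.measure_preimage ?_,
    (EuclideanSpace.volume_preserving_symm_measurableEquiv_toLp (Fin 3)).measure_preimage
      (piSet_meas a b r).nullMeasurableSet,
    cyl_vol_pi a b r hr]
  exact (((MeasurableEquiv.toLp 2 (Fin 3 → ℝ)).symm.measurable (piSet_meas a b r))).nullMeasurableSet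

lemma traj_est {d : ℕ} {rvel rctr : ℝ} (hc : 0 ≤ rctr) {p : ℝ → EuclideanSpace ℝ (Fin d)}
    (hp : IsFeasibleTraj d rvel rctr p) {τ : ℝ} (hτ : 0 ≤ τ) :
    ‖p τ - p 0 - τ • deriv p 0‖ ≤ rctr * τ^2 / 2 := by
  obtain ⟨hsm, -, hlip⟩ := hp
  set v₀ := deriv p 0 with hv₀
  have hderiv : ∀ s : ℝ, HasDerivAt (fun u => p u - u • v₀) (deriv p s - v₀) s := by
    intro s
    have h1 : HasDerivAt (fun u : ℝ => u • v₀) ((1:ℝ) • v₀) s :=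
      (hasDerivAt_id s).smul_const v₀
    rw [one_smul] at h1
    exact (((hsm.differentiable one_ne_zero) s).hasDerivAt).sub h1
  have hcont : Continuous (fun s => deriv p s - v₀) :=
    (hsm.continuous_deriv le_rfl).sub continuous_const
  have hint : ∫ s in (0:ℝ)..τ, (deriv p s - v₀) = p τ - τ • v₀ - (p 0 - (0:ℝ) • v₀) :=
    intervalIntegral.integral_eq_sub_of_hasDerivAt (fun s _ => hderiv s)
      (hcont.intervalIntegrable 0 τ)
  have heq : p τ - p 0 - τ • v₀ = ∫ s in (0:ℝ)..τ, (deriv p s - v₀) := by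
    rw [hint]; simp; abel
  rw [heq]
  have hbd : ∀ s ∈ Set.Icc (0:ℝ) τ, ‖deriv p s - v₀‖ ≤ rctr * s := by
    intro s hs
    have := hlip.dist_le_mul s 0
    rw [dist_eq_norm, Real.dist_eq, sub_zero] at this
    calc ‖deriv p s - v₀‖ ≤ (Real.toNNReal rctr : ℝ) * |s| := this
      _ = rctr * s := by rw [Real.coe_toNNReal _ hc, abs_of_nonneg hs.1]
  calc ‖∫ s in (0:ℝ)..τ, (deriv p s - v₀)‖
      ≤ ∫ s in (0:ℝ)..τ, ‖deriv p s - v₀‖ :=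
        intervalIntegral.norm_integral_le_integral_norm hτ
    _ ≤ ∫ s in (0:ℝ)..τ, rctr * s := by
        exact intervalIntegral.integral_mono_on hτ
          (hcont.norm.intervalIntegrable 0 τ)
          ((continuous_const.mul continuous_id).intervalIntegrable 0 τ) hbd
    _ = rctr * τ^2 / 2 := by
        rw [intervalIntegral.integral_const_mul]
        simp [integral_id]
        ring

lemma coord_sq (y : EuclideanSpace ℝ (Fin 3)) :
    (y 0)^2 + ((y 1)^2 + (y 2)^2) ≤ ‖y‖^2 := by
  have h : ‖y‖^2 = (y 0)^2 + (y 1)^2 + (y 2)^2 := by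
    rw [EuclideanSpace.norm_eq, Real.sq_sqrt (by positivity), Fin.sum_univ_three]
    simp [Real.norm_eq_abs, sq_abs]
  rw [h]; ring_nf; exact le_refl _

lemma reach_cover {rvel rctr : ℝ} (hc : 0 < rctr) {v₀ : EuclideanSpace ℝ (Fin 3)}
    (B : OrthonormalBasis (Fin 3) ℝ (EuclideanSpace ℝ (Fin 3))) (hB : v₀ = ‖v₀‖ • B 0)
    {t : ℝ} (ht : 0 < t) {N : ℕ} (hN : 0 < N) :
    ReachSet3 rvel rctr v₀ t ⊆
      ⋃ i ∈ Finset.range N, {x : EuclideanSpace ℝ (Fin 3) |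
        B.repr x 0 ∈ Set.Icc (t*i/N*‖v₀‖ - rctr*t^2/2) (t*(i+1)/N*‖v₀‖ + rctr*t^2/2) ∧
        (B.repr x 1)^2 + (B.repr x 2)^2 ≤ (rctr*(t*(i+1)/N)^2/2)^2} := by
  rintro x ⟨p, hp, hp0, hpd, τ, ⟨hτ0, hτt⟩, hpτ⟩
  set w : EuclideanSpace ℝ (Fin 3) := x - τ • v₀ with hwdef
  have hw : ‖w‖ ≤ rctr * τ^2 / 2 := by
    have := traj_est hc.le hp hτ0
    rwa [hp0, hpd, sub_zero, hpτ] at this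
  set i : ℕ := min (Nat.floor (τ * N / t)) (N - 1) with hidef
  have hiN : i < N := lt_of_le_of_lt (min_le_right _ _) (Nat.sub_lt hN one_pos)
  have hNR : (0:ℝ) < N := by exact_mod_cast hN
  have hlo : t * i / N ≤ τ := by
    have h1 : (i:ℝ) ≤ τ * N / t := by
      calc (i:ℝ) ≤ (Nat.floor (τ * N / t) : ℝ) := by
            exact_mod_cast min_le_left _ _
        _ ≤ τ * N / t := Nat.floor_le (by positivity)
    rw [div_le_iff₀ hNR]
    have h2 := mul_le_mul_of_nonneg_left h1 ht.le
    have h3 : t * (τ * N / t) = τ * N := by field_simp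
    linarith
  have hhi : τ ≤ t * (i + 1) / N := by
    rcases le_or_gt (Nat.floor (τ * N / t)) (N - 1) with h | h
    · have hieq : i = Nat.floor (τ * N / t) := min_eq_left h
      have h2 : τ * N / t < (i:ℝ) + 1 := by
        rw [hieq]; exact Nat.lt_floor_add_one _
      rw [le_div_iff₀ hNR]
      have h4 := mul_le_mul_of_nonneg_left h2.le ht.le
      have h3 : t * (τ * N / t) = τ * N := by field_simp
      linarith
    · have hieq : i = N - 1 := min_eq_right h.le
      have hcast : ((i:ℕ):ℝ) + 1 = (N:ℝ) := by
        rw [hieq, Nat.cast_sub hN]; norm_num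
      rw [hcast]
      calc τ ≤ t := hτt
        _ = t * N / N := by field_simp
  have hx : x = τ • v₀ + w := by rw [hwdef]; abel
  have hxdecomp : B.repr x = (τ * ‖v₀‖) • EuclideanSpace.single (0 : Fin 3) (1:ℝ)
      + B.repr w := by
    rw [hx, map_add, B.repr.map_smul]
    congr 1
    conv_lhs => rw [hB]
    rw [B.repr.map_smul, B.repr_self, smul_smul]
  have hcoord : ∀ j : Fin 3, B.repr x j
      = (τ * ‖v₀‖) * (EuclideanSpace.single (0 : Fin 3) (1:ℝ) j) + B.repr w j := by
    intro j; rw [hxdecomp]; rfl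
  have hx0 : B.repr x 0 = τ * ‖v₀‖ + B.repr w 0 := by
    rw [hcoord 0, EuclideanSpace.single_apply]; simp
  have hx1 : B.repr x 1 = B.repr w 1 := by
    rw [hcoord 1, EuclideanSpace.single_apply]
    simp [Fin.ext_iff]
  have hx2 : B.repr x 2 = B.repr w 2 := by
    rw [hcoord 2, EuclideanSpace.single_apply]
    simp [Fin.ext_iff]
  have hwsq : (B.repr w 0)^2 + ((B.repr w 1)^2 + (B.repr w 2)^2) ≤ ‖w‖^2 := by
    have := coord_sq (B.repr w)
    rwa [LinearIsometryEquiv.norm_map] at this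
  have hvn : (0:ℝ) ≤ ‖v₀‖ := norm_nonneg _
  have hwt : ‖w‖ ≤ rctr * t^2 / 2 := by
    refine hw.trans ?_
    gcongr
  have hw0abs : |B.repr w 0| ≤ ‖w‖ := by
    rw [← Real.sqrt_sq_eq_abs, ← Real.sqrt_sq (norm_nonneg w)]
    exact Real.sqrt_le_sqrt (by
      linarith [sq_nonneg (B.repr w 1), sq_nonneg (B.repr w 2)])
  have hw0 := abs_le.1 (hw0abs.trans hwt)
  apply Set.mem_biUnion (Finset.mem_range.2 hiN)
  refine ⟨⟨?_, ?_⟩, ?_⟩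
  · rw [hx0]
    have := mul_le_mul_of_nonneg_right hlo hvn
    linarith [hw0.1]
  · rw [hx0]
    have := mul_le_mul_of_nonneg_right hhi hvn
    linarith [hw0.2]
  · rw [hx1, hx2]
    have hA : rctr * τ^2 / 2 ≤ rctr * (t*(i+1)/N)^2 / 2 := by gcongr
    have h8 : ‖w‖^2 ≤ (rctr * (t*(i+1)/N)^2 / 2)^2 :=
      pow_le_pow_left₀ (norm_nonneg w) (hw.trans hA) 2
    linarith [sq_nonneg (B.repr w 0)]

lemma sum_pow4 (N : ℕ) : ∑ i ∈ Finset.range N, ((i:ℝ)+1)^4 ≤ ((N:ℝ)+1)^5 / 5 := by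
  induction N with
  | zero => norm_num
  | succ n ih =>
    rw [Finset.sum_range_succ, Nat.cast_succ]
    have hn : (0:ℝ) ≤ (n:ℝ) := Nat.cast_nonneg n
    nlinarith [ih, sq_nonneg ((n:ℝ)), pow_pos (by linarith : (0:ℝ) < (n:ℝ)+1) 3]

lemma exists_basis (v₀ : EuclideanSpace ℝ (Fin 3)) :
    ∃ B : OrthonormalBasis (Fin 3) ℝ (EuclideanSpace ℝ (Fin 3)), v₀ = ‖v₀‖ • B 0 := by
  by_cases h : v₀ = 0
  · exact ⟨EuclideanSpace.basisFun (Fin 3) ℝ, by simp [h]⟩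
  · have hn : ‖v₀‖ ≠ 0 := norm_ne_zero_iff.2 h
    set u : EuclideanSpace ℝ (Fin 3) := ‖v₀‖⁻¹ • v₀ with hu
    have hunorm : ‖u‖ = 1 := by
      rw [hu, norm_smul, norm_inv, norm_norm, inv_mul_cancel₀ hn]
    have hcard : Module.finrank ℝ (EuclideanSpace ℝ (Fin 3)) = Fintype.card (Fin 3) := by
      simp [finrank_euclideanSpace]
    have horth : Orthonormal ℝ (({0} : Set (Fin 3)).restrict (fun _ : Fin 3 => u)) := by
      constructor
      · intro i; exact hunorm
      · intro i j hij
        exact absurd (Subtype.ext (by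
          have hi := i.2; have hj := j.2
          simp only [Set.mem_singleton_iff] at hi hj
          rw [hi, hj])) hij
    obtain ⟨B, hB⟩ := horth.exists_orthonormalBasis_extension_of_card_eq hcard
    refine ⟨B, ?_⟩
    rw [hB 0 rfl, hu, smul_smul, mul_inv_cancel₀ hn, one_smul]

lemma vol_quant (rvel rctr : ℝ) (hv : 0 < rvel) (hc : 0 < rctr)
    (v₀ : EuclideanSpace ℝ (Fin 3)) (hv₀ : ‖v₀‖ ≤ rvel) (N : ℕ) (hN : 0 < N)
    {t : ℝ} (ht : 0 < t) :
    (volume (ReachSet3 rvel rctr v₀ t)).toReal ≤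
      Real.pi*rctr^2*rvel*((N:ℝ)+1)^5/(20*(N:ℝ)^5) * t^5
        + Real.pi*rctr^3*((N:ℝ)+1)^5/(20*(N:ℝ)^4) * t^6 := by
  obtain ⟨B, hB⟩ := exists_basis v₀
  have hNR : (0:ℝ) < N := by exact_mod_cast hN
  set K : ℝ := t*‖v₀‖/N + rctr*t^2 with hK
  have hKpos : 0 ≤ K := by positivity
  set r : ℕ → ℝ := fun i => rctr*(t*((i:ℝ)+1)/N)^2/2 with hr
  have hrpos : ∀ i : ℕ, 0 ≤ r i := by intro i; positivity
  have hvol : volume (ReachSet3 rvel rctr v₀ t)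
      ≤ ENNReal.ofReal K * ENNReal.ofReal (∑ i ∈ Finset.range N, Real.pi * (r i)^2) := by
    calc volume (ReachSet3 rvel rctr v₀ t)
        ≤ volume (⋃ i ∈ Finset.range N, {x : EuclideanSpace ℝ (Fin 3) |
            B.repr x 0 ∈ Set.Icc (t*i/N*‖v₀‖ - rctr*t^2/2) (t*(i+1)/N*‖v₀‖ + rctr*t^2/2) ∧
            (B.repr x 1)^2 + (B.repr x 2)^2 ≤ (rctr*(t*(i+1)/N)^2/2)^2}) :=
          measure_mono (reach_cover hc B hB ht hN)
      _ ≤ ∑ i ∈ Finset.range N, volume {x : EuclideanSpace ℝ (Fin 3) |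
            B.repr x 0 ∈ Set.Icc (t*i/N*‖v₀‖ - rctr*t^2/2) (t*(i+1)/N*‖v₀‖ + rctr*t^2/2) ∧
            (B.repr x 1)^2 + (B.repr x 2)^2 ≤ (rctr*(t*(i+1)/N)^2/2)^2} :=
          measure_biUnion_finset_le _ _
      _ = ∑ i ∈ Finset.range N, ENNReal.ofReal K * ENNReal.ofReal (Real.pi * (r i)^2) := by
          refine Finset.sum_congr rfl (fun i _ => ?_)
          rw [cyl_vol B _ _ _ (hrpos i)]
          congr 1
          rw [hK]
          congr 1
          field_simp
          ring
      _ = ENNReal.ofReal K * ∑ i ∈ Finset.range N, ENNReal.ofReal (Real.pi * (r i)^2) := by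
          rw [Finset.mul_sum]
      _ = ENNReal.ofReal K * ENNReal.ofReal (∑ i ∈ Finset.range N, Real.pi * (r i)^2) := by
          rw [ENNReal.ofReal_sum_of_nonneg (fun i _ => by positivity)]
  have hsum : ∑ i ∈ Finset.range N, Real.pi * (r i)^2
      ≤ Real.pi*rctr^2*t^4*((N:ℝ)+1)^5/(20*(N:ℝ)^4) := by
    have heach : ∀ i ∈ Finset.range N,
        Real.pi * (r i)^2 = (Real.pi*rctr^2*t^4/(4*(N:ℝ)^4)) * ((i:ℝ)+1)^4 := by
      intro i _
      rw [hr]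
      field_simp
      ring
    rw [Finset.sum_congr rfl heach, ← Finset.mul_sum]
    have := sum_pow4 N
    calc (Real.pi*rctr^2*t^4/(4*(N:ℝ)^4)) * ∑ i ∈ Finset.range N, ((i:ℝ)+1)^4
        ≤ (Real.pi*rctr^2*t^4/(4*(N:ℝ)^4)) * (((N:ℝ)+1)^5/5) := by
          apply mul_le_mul_of_nonneg_left this (by positivity)
      _ = Real.pi*rctr^2*t^4*((N:ℝ)+1)^5/(20*(N:ℝ)^4) := by ring
  have hfinal : volume (ReachSet3 rvel rctr v₀ t)
      ≤ ENNReal.ofReal ((t*rvel/N + rctr*t^2) * (Real.pi*rctr^2*t^4*((N:ℝ)+1)^5/(20*(N:ℝ)^4))) := by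
    refine hvol.trans ?_
    rw [← ENNReal.ofReal_mul hKpos]
    apply ENNReal.ofReal_le_ofReal
    have hK2 : K ≤ t*rvel/N + rctr*t^2 := by
      rw [hK]
      have : t*‖v₀‖/N ≤ t*rvel/N := by
        gcongr
      linarith
    apply mul_le_mul hK2 hsum (Finset.sum_nonneg (fun i _ => by positivity)) (by positivity)
  refine (ENNReal.toReal_le_of_le_ofReal (by positivity) (hfinal.trans ?_))
  apply ENNReal.ofReal_le_ofReal
  have h9 : (t*rvel/N + rctr*t^2) * (Real.pi*rctr^2*t^4*((N:ℝ)+1)^5/(20*(N:ℝ)^4))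
      = Real.pi*rctr^2*rvel*((N:ℝ)+1)^5/(20*(N:ℝ)^5) * t^5
        + Real.pi*rctr^3*((N:ℝ)+1)^5/(20*(N:ℝ)^4) * t^6 := by
    field_simp
  rw [h9]

theorem reachable_volume_bound (rvel rctr : ℝ) (hv : 0 < rvel) (hc : 0 < rctr)
    (v₀ : EuclideanSpace ℝ (Fin 3)) (hv₀ : ‖v₀‖ ≤ rvel) :
    Filter.limsup
      (fun t : ℝ => (volume (ReachSet3 rvel rctr v₀ t)).toReal / t ^ 5)
      (nhdsWithin 0 (Set.Ioi 0)) ≤ Real.pi * rctr ^ 2 * rvel / 20 := by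
  set f : ℝ → ℝ := fun t => (volume (ReachSet3 rvel rctr v₀ t)).toReal / t ^ 5 with hf
  set C : ℝ := Real.pi * rctr ^ 2 * rvel / 20 with hC
  have hfnonneg : ∀ᶠ t in nhdsWithin (0:ℝ) (Set.Ioi 0), 0 ≤ f t := by
    filter_upwards [self_mem_nhdsWithin] with t ht
    have ht' : (0:ℝ) < t := ht
    exact div_nonneg ENNReal.toReal_nonneg (by positivity)
  have key : ∀ N : ℕ, 1 ≤ N → Filter.limsup f (nhdsWithin 0 (Set.Ioi 0))
      ≤ C * (((N:ℝ)+1)/N)^5 := by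
    intro N hN
    have hNR : (0:ℝ) < N := by exact_mod_cast hN
    set CN : ℝ := Real.pi*rctr^2*rvel*((N:ℝ)+1)^5/(20*(N:ℝ)^5) with hCN
    set DN : ℝ := Real.pi*rctr^3*((N:ℝ)+1)^5/(20*(N:ℝ)^4) with hDN
    have hev : ∀ᶠ t in nhdsWithin (0:ℝ) (Set.Ioi 0), f t ≤ CN + DN * t := by
      filter_upwards [self_mem_nhdsWithin] with t ht
      have ht' : (0:ℝ) < t := ht
      have hq := vol_quant rvel rctr hv hc v₀ hv₀ N hN ht'
      rw [hf, div_le_iff₀ (by positivity : (0:ℝ) < t^5)]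
      calc (volume (ReachSet3 rvel rctr v₀ t)).toReal
          ≤ CN * t^5 + DN * t^6 := hq
        _ = (CN + DN * t) * t^5 := by ring
    have htg : Tendsto (fun t : ℝ => CN + DN * t) (nhdsWithin 0 (Set.Ioi 0)) (nhds CN) := by
      have : Tendsto (fun t : ℝ => CN + DN * t) (nhds 0) (nhds (CN + DN * 0)) := by
        exact (continuous_const.add (continuous_const.mul continuous_id)).tendsto 0
      rw [mul_zero, add_zero] at this
      exact this.mono_left nhdsWithin_le_nhds
    have h1 : Filter.limsup f (nhdsWithin 0 (Set.Ioi 0))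
        ≤ Filter.limsup (fun t : ℝ => CN + DN * t) (nhdsWithin 0 (Set.Ioi 0)) :=
      limsup_le_limsup hev
        (Filter.isCoboundedUnder_le_of_eventually_le _ hfnonneg)
        htg.isBoundedUnder_le
    rw [htg.limsup_eq] at h1
    refine h1.trans (le_of_eq ?_)
    rw [hCN, hC]
    field_simp
    try ring
  have htend : Tendsto (fun N : ℕ => C * (((N:ℝ)+1)/N)^5) atTop (nhds C) := by
    have h1 : Tendsto (fun N : ℕ => ((N:ℝ)+1)/N) atTop (nhds 1) := by
      have h2 : Tendsto (fun N : ℕ => 1 + 1/(N:ℝ)) atTop (nhds (1 + 0)) :=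
        tendsto_const_nhds.add tendsto_one_div_atTop_nhds_zero_nat
      rw [add_zero] at h2
      refine Tendsto.congr' ?_ h2
      filter_upwards [Filter.eventually_ge_atTop 1] with N hN
      have hNR : (0:ℝ) < N := by exact_mod_cast hN
      field_simp
    have h3 : Tendsto (fun N : ℕ => C * (((N:ℝ)+1)/N)^5) atTop (nhds (C * 1^5)) :=
      (h1.pow 5).const_mul C
    rwa [one_pow, mul_one] at h3
  exact ge_of_tendsto htend (Filter.eventually_atTop.2 ⟨1, key⟩)
end
end

section
/- Let d ≥ 1, ρ > 0, r_ctr > 0, and set s = √(ρ·r_ctr). (i) If γ : ℝ → ℝ^d is a feasible curve for the Dubins vehicle with minimum turning radius ρ (unit speed, derivative (1/ρ)-Lipschitz), then the reparametrized curve t ↦ γ(s·t) is a feasible trajectory for the double integrator with speed bound s and control bound r_ctr, traversed at constant speed s. (ii) Conversely, if p : ℝ → ℝ^d is a feasible trajectory for the double integrator with control bound r_ctr that moves at constant speed s₀ > 0 (i.e. ‖p′(t)‖ = s₀ for all t), then the unit-speed reparametrization t ↦ p(t/s₀) is a feasible curve for the Dubins vehicle with minimum turning radius s₀²/r_ctr.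 -/
noncomputable section

/-- A feasible curve for the Dubins vehicle with minimum turning radius `ρ`:
a C¹ unit-speed curve whose derivative is `(1/ρ)`-Lipschitz. -/
def IsDubinsCurve (d : ℕ) (ρ : ℝ) (γ : ℝ → EuclideanSpace ℝ (Fin d)) : Prop :=
  ContDiff ℝ 1 γ ∧ (∀ t : ℝ, ‖deriv γ t‖ = 1) ∧
    LipschitzWith (Real.toNNReal (1 / ρ)) (deriv γ)

lemma deriv_comp_const_mul' {d : ℕ} (f : ℝ → EuclideanSpace ℝ (Fin d))
    (hf : ContDiff ℝ 1 f) (c t : ℝ) :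
    deriv (fun t => f (c * t)) t = c • deriv f (c * t) := by
  have h1 : HasDerivAt f (deriv f (c * t)) (c * t) :=
    (hf.differentiable one_ne_zero (c * t)).hasDerivAt
  have h2 : HasDerivAt (fun t : ℝ => c * t) c t := by
    simpa using (hasDerivAt_id t).const_mul c
  exact (h1.scomp t h2).deriv

lemma lip_comp_const_mul {d : ℕ} (f : ℝ → EuclideanSpace ℝ (Fin d))
    (hf : ContDiff ℝ 1 f) {K : ℝ} (hK : 0 ≤ K)
    (hlip : LipschitzWith (Real.toNNReal K) (deriv f)) (c : ℝ) {K' : ℝ}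
    (hK' : c ^ 2 * K ≤ K') :
    LipschitzWith (Real.toNNReal K') (deriv (fun t => f (c * t))) := by
  have hK'0 : 0 ≤ K' := le_trans (by positivity) hK'
  apply LipschitzWith.of_dist_le_mul
  intro x y
  rw [deriv_comp_const_mul' f hf c x, deriv_comp_const_mul' f hf c y]
  rw [dist_eq_norm, ← smul_sub, norm_smul, Real.coe_toNNReal _ hK'0]
  have h := hlip.dist_le_mul (c * x) (c * y)
  rw [Real.coe_toNNReal _ hK, dist_eq_norm, dist_eq_norm] at h
  rw [dist_eq_norm, Real.norm_eq_abs]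
  have hcx : ‖c * x - c * y‖ = |c| * ‖x - y‖ := by
    rw [← mul_sub]; simp [abs_mul]
  calc |c| * ‖deriv f (c * x) - deriv f (c * y)‖
      ≤ |c| * (K * (|c| * ‖x - y‖)) := by
        apply mul_le_mul_of_nonneg_left _ (abs_nonneg c)
        calc ‖deriv f (c * x) - deriv f (c * y)‖ ≤ K * ‖c * x - c * y‖ := h
        _ = K * (|c| * ‖x - y‖) := by rw [hcx]
    _ = (c ^ 2 * K) * ‖x - y‖ := by rw [← sq_abs c]; ring
    _ ≤ K' * ‖x - y‖ := by
        apply mul_le_mul_of_nonneg_right hK' (norm_nonneg _)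

theorem dubins_double_integrator_equivalence (d : ℕ) (hd : 1 ≤ d)
    (ρ rctr : ℝ) (hρ : 0 < ρ) (hc : 0 < rctr) :
    -- (i) a Dubins curve, reparametrized to speed `s = √(ρ rctr)`, is a feasible
    -- double-integrator trajectory with speed bound `s`, traversed at constant speed `s`
    (∀ γ : ℝ → EuclideanSpace ℝ (Fin d), IsDubinsCurve d ρ γ →
      IsFeasibleTraj d (Real.sqrt (ρ * rctr)) rctr
        (fun t => γ (Real.sqrt (ρ * rctr) * t)) ∧
      (∀ t : ℝ, ‖deriv (fun t => γ (Real.sqrt (ρ * rctr) * t)) t‖ =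
        Real.sqrt (ρ * rctr))) ∧
    -- (ii) a double-integrator trajectory at constant speed `s₀ ≤ rvel`, reparametrized
    -- to unit speed, is a Dubins curve with minimum turning radius `s₀² / rctr`
    (∀ (s₀ : ℝ) (p : ℝ → EuclideanSpace ℝ (Fin d)), 0 < s₀ →
      ContDiff ℝ 1 p → (∀ t : ℝ, ‖deriv p t‖ = s₀) →
      LipschitzWith (Real.toNNReal rctr) (deriv p) →
      IsDubinsCurve d (s₀ ^ 2 / rctr) (fun t => p (t / s₀))) := by
  constructor
  · intro γ ⟨hγ1, hγ2, hγ3⟩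
    set s := Real.sqrt (ρ * rctr) with hs
    have hs0 : 0 < s := Real.sqrt_pos.mpr (by positivity)
    have hspeed : ∀ t : ℝ, ‖deriv (fun t => γ (s * t)) t‖ = s := by
      intro t
      rw [deriv_comp_const_mul' γ hγ1 s t, norm_smul, hγ2, mul_one,
        Real.norm_eq_abs, abs_of_pos hs0]
    have hcd : ContDiff ℝ 1 (fun t => γ (s * t)) :=
      hγ1.comp (contDiff_const.mul contDiff_id)
    refine ⟨⟨hcd, fun t => (hspeed t).le, ?_⟩, hspeed⟩
    · apply lip_comp_const_mul γ hγ1 (by positivity) hγ3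
      rw [Real.sq_sqrt (by positivity : (0:ℝ) ≤ ρ * rctr)]
      rw [div_eq_mul_inv, one_mul]
      field_simp
      exact le_rfl
  · intro s₀ p hs₀ hp1 hp2 hp3
    have heq : (fun t => p (t / s₀)) = fun t => p (s₀⁻¹ * t) := by
      funext t; rw [div_eq_inv_mul]
    rw [heq]
    refine ⟨hp1.comp (contDiff_const.mul contDiff_id), ?_, ?_⟩
    · intro t
      rw [deriv_comp_const_mul' p hp1 s₀⁻¹ t, norm_smul, hp2,
        Real.norm_eq_abs, abs_of_pos (by positivity), inv_mul_cancel₀ hs₀.ne']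
    · apply lip_comp_const_mul p hp1 hc.le hp3
      rw [one_div, div_eq_mul_inv]
      field_simp
      exact le_rfl
end
end
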